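/- arXiv:1206.5234 — 3 statements merged into one kernel-verified Lean document; each statement's English description precedes it below -/
import Mathlib

section
/- Let (W,S) be a right-angled Coxeter system with S finite and presentation graph Γ = Γ(W,S). Assume: (i) no subset of S spanning a complete subgraph of Γ separates Γ (equivalently, W is one-ended); and (ii) (W,S) has no virtual factor separator. Let g ∈ W and let γ1++γ2 be a reduced word for g such that the subgroup of W generated by lett(γ2) is infinite. Let s, t ∈ S with s ∉ B(g) and t ∉ B(g). Then there exists a walk s = v_0, v_1, ..., v_p = t in Γ (each v_{i} adjacent in Γ to v_{i+1}) with p ≥ 2 such that no v_i with 0 < i < p lies in lk(lett(γ2)) ∪ B(g). -/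
/-- A Coxeter matrix is right-angled if all off-diagonal entries are `2` or `0`
(where `0` encodes `∞`). -/
def CoxeterMatrix.IsRightAngled {B : Type*} (M : CoxeterMatrix B) : Prop :=
  ∀ i j : B, i ≠ j → M i j = 2 ∨ M i j = 0

variable {B W : Type*} [Group W] {M : CoxeterMatrix B}

/-- Adjacency in the presentation graph `Γ(W,S)` of a right-angled Coxeter system:
two distinct generators are adjacent iff they commute. -/
def PresAdj (cs : CoxeterSystem M W) (a b : B) : Prop :=
  a ≠ b ∧ Commute (cs.simple a) (cs.simple b)

/-- There is a walk in the presentation graph from `a` to `b` all of whose vertices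
avoid the set `C`. -/
def JoinedOutside (cs : CoxeterSystem M W) (C : Set B) (a b : B) : Prop :=
  ∃ l : List B, l.Chain' (PresAdj cs) ∧ l.head? = some a ∧ l.getLast? = some b ∧
    ∀ v ∈ l, v ∉ C

/-- A set `C` of generators separates the presentation graph if the induced subgraph on the
complement of `C` is disconnected. -/
def SeparatesGraph (cs : CoxeterSystem M W) (C : Set B) : Prop :=
  ∃ a b : B, a ∉ C ∧ b ∉ C ∧ ¬ JoinedOutside cs C a b

/-- The link of a set `A` of generators: all generators distinct from and commuting with
every element of `A`. -/
def lk (cs : CoxeterSystem M W) (A : Set B) : Set B :=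
  {t : B | ∀ a ∈ A, a ≠ t ∧ Commute (cs.simple a) (cs.simple t)}

/-- A virtual factor separator for the system: a pair `(C, D)` with `D ⊆ C`, `C` separating
the presentation graph, `⟨C∖D⟩` finite and commuting elementwise with `D`, and two
non-commuting generators outside `D` commuting with every element of `D`. -/
def IsVirtualFactorSeparator (cs : CoxeterSystem M W) (C D : Set B) : Prop :=
  D ⊆ C ∧ SeparatesGraph cs C ∧
  ((Subgroup.closure (cs.simple '' (C \ D)) : Subgroup W) : Set W).Finite ∧
  (∀ c ∈ C \ D, ∀ d ∈ D, Commute (cs.simple c) (cs.simple d)) ∧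
  ∃ s t : B, s ∉ D ∧ t ∉ D ∧ ¬ Commute (cs.simple s) (cs.simple t) ∧
    ∀ d ∈ D, Commute (cs.simple s) (cs.simple d) ∧ Commute (cs.simple t) (cs.simple d)


open CoxeterSystem List

namespace AvoidAux
set_option linter.unusedSectionVars false

variable {B W : Type*} [Group W] {M : CoxeterMatrix B} (cs : CoxeterSystem M W)

local prefix:100 "s" => cs.simple
local prefix:100 "π" => cs.wordProd
local prefix:100 "ris" => cs.rightInvSeq

open Classical in
/-- indicator function -/
noncomputable def chi (i : B) : B → ZMod 2 := fun b => if b = i then 1 else 0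

lemma mult_self (x : Multiplicative (B → ZMod 2)) : x * x = 1 := by
  have h : x.toAdd + x.toAdd = 0 := by
    funext b
    exact CharTwo.add_self_eq_zero _
  rw [← ofAdd_toAdd x, ← ofAdd_add, h, ofAdd_zero]

lemma ab_liftable (hra : M.IsRightAngled) :
    M.IsLiftable (fun i => Multiplicative.ofAdd (chi (B := B) i)) := by
  intro i j
  rcases eq_or_ne i j with rfl | hne
  · rw [M.diagonal i, pow_one]; exact mult_self _
  · rcases hra i j hne with h2 | h0
    · rw [h2, sq, mult_self]
    · rw [h0, pow_zero]

/-- The "abelianization" homomorphism, recording each letter mod 2. -/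
noncomputable def abHom (hra : M.IsRightAngled) : W →* Multiplicative (B → ZMod 2) :=
  cs.lift ⟨_, ab_liftable hra⟩

lemma abHom_simple (hra : M.IsRightAngled) (i : B) :
    abHom cs hra (s i) = Multiplicative.ofAdd (chi i) :=
  cs.lift_apply_simple (ab_liftable hra) i

lemma conj_simple_eq (hra : M.IsRightAngled) (w : W) {i j : B}
    (h : w⁻¹ * s i * w = s j) : i = j := by
  have hh := congrArg (abHom cs hra) h
  simp only [map_mul, map_inv, abHom_simple] at hh
  have h2 : Multiplicative.ofAdd (chi (B := B) i) = Multiplicative.ofAdd (chi j) := by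
    have hc : ∀ a b : Multiplicative (B → ZMod 2), a⁻¹ * b * a = b := by
      intro a b; rw [mul_comm, ← mul_assoc, mul_inv_cancel, one_mul]
    rwa [hc] at hh
  have h3 : chi (B := B) i = chi j := by
    simpa using h2
  by_contra hne
  have h4 := congrFun h3 i
  simp only [chi, if_pos rfl, if_neg hne] at h4
  exact one_ne_zero h4

lemma simple_ne (hra : M.IsRightAngled) {i j : B} (h : i ≠ j) : s i ≠ s j := by
  intro he
  exact h (conj_simple_eq cs hra 1 (by simpa using he))

lemma commute_of_M_eq_two {i j : B} (h : M i j = 2) : Commute (s i) (s j) := by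
  have hp := cs.simple_mul_simple_pow i j
  rw [h, sq] at hp
  have h1 : s i * s j = (s i * s j)⁻¹ := by
    rw [eq_inv_iff_mul_eq_one]; exact hp
  rw [mul_inv_rev, cs.inv_simple, cs.inv_simple] at h1
  exact h1

lemma M_eq_zero_of_not_commute (hra : M.IsRightAngled) {i j : B} (hne : i ≠ j)
    (h : ¬ Commute (s i) (s j)) : M i j = 0 := by
  rcases hra i j hne with h2 | h0
  · exact absurd (commute_of_M_eq_two cs h2) h
  · exact h0

section Mu

open Classical

variable (hra : M.IsRightAngled)

local notation "a₂" => (1 : ZMod 2)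

/-- counting occurrences in a list over a type without decidable equality -/
noncomputable def cnt (t : W) : List W → ℕ
  | [] => 0
  | a :: l => (if a = t then 1 else 0) + cnt t l

@[simp] lemma cnt_nil (t : W) : cnt t ([] : List W) = 0 := rfl

lemma cnt_cons (t a : W) (l : List W) :
    cnt t (a :: l) = (if a = t then 1 else 0) + cnt t l := rfl

lemma cnt_append (t : W) (l l' : List W) : cnt t (l ++ l') = cnt t l + cnt t l' := by
  induction l with
  | nil => simp
  | cons a l ih => simp [cnt_cons, ih]; ring

lemma cnt_map_inj (t : W) (f : W → W) (hf : Function.Injective f) (l : List W) :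
    cnt (f t) (List.map f l) = cnt t l := by
  induction l with
  | nil => simp
  | cons a l ih =>
    simp only [List.map_cons, cnt_cons, ih]
    congr 1
    by_cases h : a = t
    · simp [h]
    · have h2 : ¬ (f a = f t) := fun he => h (hf he)
      simp [h, h2]

lemma mem_of_cnt_ne_zero {t : W} {l : List W} (h : cnt t l ≠ 0) : t ∈ l := by
  induction l with
  | nil => simp [cnt] at h
  | cons a l ih =>
    rw [cnt_cons] at h
    by_cases ha : a = t
    · simp [ha]
    · simp only [ha, if_false, zero_add] at h
      exact List.mem_cons_of_mem _ (ih h)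

lemma cnt_eq_zero_of_not_mem {t : W} {l : List W} (h : t ∉ l) : cnt t l = 0 := by
  by_contra hc
  exact h (mem_of_cnt_ne_zero hc)

/-- underlying function of the sign permutation -/
noncomputable def muF (i : B) : W × ZMod 2 → W × ZMod 2 :=
  fun p => (s i * p.1 * s i, if p.1 = s i then p.2 + 1 else p.2)

omit [Group W] in
lemma zmod2_add_one_one (e : ZMod 2) : e + 1 + 1 = e := by
  have h : (1 : ZMod 2) + 1 = 0 := by decide
  rw [add_assoc, h, add_zero]

lemma conj_eq_iff {u : W} (v t : W) (hu : u * u = 1) : u * t * u = v ↔ t = u * v * u := by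
  constructor
  · intro h
    rw [← h]
    exact (calc u * (u * t * u) * u = (u * u) * t * (u * u) := by group
      _ = t := by rw [hu, one_mul, mul_one]).symm
  · intro h
    rw [h]
    calc u * (u * v * u) * u = (u * u) * v * (u * u) := by group
      _ = v := by rw [hu, one_mul, mul_one]

lemma muF_invol (i : B) : Function.Involutive (muF cs i) := by
  intro p
  obtain ⟨t, e⟩ := p
  have hss := cs.simple_mul_simple_self i
  have hfix : s i * (s i * t * s i) * s i = t := by
    calc s i * (s i * t * s i) * s i = (s i * s i) * t * (s i * s i) := by group
      _ = t := by rw [hss, one_mul, mul_one]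
  have hcond : (s i * t * s i = s i) ↔ t = s i := by
    rw [conj_eq_iff _ _ hss, hss, one_mul]
  simp only [muF]
  by_cases h : t = s i
  · simp only [if_pos h, if_pos (hcond.mpr h), hfix, zmod2_add_one_one]
  · simp only [if_neg h, if_neg (fun hh => h (hcond.mp hh)), hfix]

lemma muF_four {i j : B} (hc : Commute (s i) (s j)) (hne : s i ≠ s j) (p : W × ZMod 2) :
    muF cs i (muF cs j (muF cs i (muF cs j p))) = p := by
  obtain ⟨t, e⟩ := p
  set a := s i with ha
  set b := s j with hb
  have haa : a * a = 1 := cs.simple_mul_simple_self i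
  have hbb : b * b = 1 := cs.simple_mul_simple_self j
  have hcomm : a * b = b * a := hc
  have hbab : b * a * b = a := by
    rw [mul_assoc, hcomm, ← mul_assoc, hbb, one_mul]
  have haba : a * b * a = b := by
    rw [mul_assoc, ← hcomm, ← mul_assoc, haa, one_mul]
  -- four step composition
  simp only [muF]
  rw [← ha, ← hb]
  -- the element components
  have e1 : a * (b * t * b) * a = (a*b) * t * (b*a) := by group
  have habab : (a * b) * (a * b) = 1 := by
    rw [show a * b * (a * b) = a * (b * a) * b by group, ← hcomm,
      show a * (a * b) * b = (a * a) * (b * b) by group, haa, hbb, one_mul]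
  have hbaba : (b * a) * (b * a) = 1 := by
    rw [show b * a * (b * a) = b * (a * b) * a by group, hcomm,
      show b * (b * a) * a = (b * b) * (a * a) by group, haa, hbb, one_mul]
  have hba_eq : b * a = a * b := hcomm.symm
  have hfix : a * (b * (a * (b * t * b) * a) * b) * a = t := by
    calc a * (b * (a * (b * t * b) * a) * b) * a
        = ((a*b)*(a*b)) * t * ((b*a)*(b*a)) := by group
      _ = t := by rw [habab, hbaba, one_mul, mul_one]
  -- conditions
  have hc2 : (b * t * b = a) ↔ t = a := by
    rw [conj_eq_iff _ _ hbb, hbab]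
  have hc3 : (a * (b * t * b) * a = b) ↔ t = b := by
    rw [e1, hba_eq, conj_eq_iff _ _ habab]
    constructor
    · intro h
      rw [h]
      calc (a*b) * b * (a*b) = a * (b * b) * (a * b) := by group
        _ = b := by rw [hbb, mul_one, ← mul_assoc, haa, one_mul]
    · intro h
      rw [h]
      exact (calc (a*b) * b * (a*b) = a * (b * b) * (a * b) := by group
        _ = b := by rw [hbb, mul_one, ← mul_assoc, haa, one_mul]).symm
  have hc4 : (b * (a * (b * t * b) * a) * b = a) ↔ t = a := by
    have lhs_eq : b * (a * (b * t * b) * a) * b = a * t * a := by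
      calc b * (a * (b * t * b) * a) * b = (b*a*b) * t * (b*a*b) := by group
        _ = a * t * a := by rw [hbab]
    rw [lhs_eq, conj_eq_iff _ _ haa, haa, one_mul]
  have hne' : t = a → t = b → False := fun h1 h2 => hne (h1 ▸ h2 ▸ rfl)
  by_cases h1 : t = b
  · have h2 : ¬ (t = a) := fun h => hne' h h1
    simp only [if_pos h1, if_neg (fun h => h2 (hc2.mp h)), if_pos (hc3.mpr h1),
      if_neg (fun h => h2 (hc4.mp h)), hfix, Prod.mk.injEq]
    exact ⟨trivial, zmod2_add_one_one e⟩
  · by_cases h2 : t = a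
    · simp only [if_neg h1, if_pos (hc2.mpr h2), if_neg (fun h => h1 (hc3.mp h)),
        if_pos (hc4.mpr h2), hfix, Prod.mk.injEq]
      exact ⟨trivial, zmod2_add_one_one e⟩
    · simp only [if_neg h1, if_neg (fun h => h2 (hc2.mp h)), if_neg (fun h => h1 (hc3.mp h)),
        if_neg (fun h => h2 (hc4.mp h)), hfix]

/-- the sign permutation for one generator -/
noncomputable def muE (i : B) : Equiv.Perm (W × ZMod 2) := (muF_invol cs i).toPerm

lemma muE_apply (i : B) (p : W × ZMod 2) : muE cs i p = muF cs i p := rfl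

lemma mu_liftable (hra : M.IsRightAngled) : M.IsLiftable fun i => muE cs i := by
  intro i j
  rcases eq_or_ne i j with rfl | hne
  · rw [M.diagonal i, pow_one]
    ext p
    · exact congrArg Prod.fst (muF_invol cs i p)
    · exact congrArg Prod.snd (muF_invol cs i p)
  · rcases hra i j hne with h2 | h0
    · rw [h2, sq]
      ext p
      · exact congrArg Prod.fst
          (muF_four cs (commute_of_M_eq_two cs h2) (simple_ne cs hra hne) p)
      · exact congrArg Prod.snd
          (muF_four cs (commute_of_M_eq_two cs h2) (simple_ne cs hra hne) p)
    · rw [h0, pow_zero]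

/-- The sign/permutation representation. -/
noncomputable def muHom (hra : M.IsRightAngled) : W →* Equiv.Perm (W × ZMod 2) :=
  cs.lift ⟨_, mu_liftable cs hra⟩

lemma muHom_simple (i : B) : muHom cs hra (s i) = muE cs i :=
  cs.lift_apply_simple (mu_liftable cs hra) i

lemma muHom_wordProd (ω : List B) (t : W) (e : ZMod 2) :
    muHom cs hra (π ω) (t, e) =
      ((π ω) * t * (π ω)⁻¹, e + (cnt (t) (ris ω) : ZMod 2)) := by
  induction ω generalizing e with
  | nil => simp [CoxeterSystem.wordProd_nil]
  | cons i ω ih =>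
    have hris : ris (i :: ω) = ((π ω)⁻¹ * s i * π ω) :: ris ω := rfl
    rw [cs.wordProd_cons, map_mul, Equiv.Perm.mul_apply, ih, muHom_simple, muE_apply]
    simp only [muF, hris, cnt_cons]
    have hcond : (π ω * t * (π ω)⁻¹ = s i) ↔ ((π ω)⁻¹ * s i * π ω = t) := by
      constructor
      · intro h; rw [← h]; group
      · intro h; rw [← h]; group
    have hfst : s i * (π ω * t * (π ω)⁻¹) * s i = (s i * π ω) * t * (s i * π ω)⁻¹ := by
      rw [mul_inv_rev, cs.inv_simple]; group
    by_cases h : π ω * t * (π ω)⁻¹ = s i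
    · rw [if_pos h, if_pos (hcond.mp h), hfst]
      push_cast
      ring_nf
    · rw [if_neg h, if_neg (fun hh => h (hcond.mpr hh)), hfst]
      push_cast
      ring_nf

lemma cnt_parity_eq (hra : M.IsRightAngled) {ω ω' : List B} (h : π ω = π ω') (t : W) :
    ((cnt t (ris ω) : ZMod 2)) = (cnt t (ris ω') : ZMod 2) := by
  have h1 := muHom_wordProd cs hra ω t 0
  have h2 := muHom_wordProd cs hra ω' t 0
  rw [h] at h1
  have h3 := congrArg Prod.snd (h1.symm.trans h2)
  simpa using h3

end Mu
section StrongExchange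

local prefix:100 "ℓ" => cs.length

lemma mem_ris_of_descent (hra : M.IsRightAngled) {ω : List B} (hred : cs.IsReduced ω) {r : B}
    (hdes : cs.IsRightDescent (π ω) r) : s r ∈ ris ω := by
  obtain ⟨ω'', hred'', heq''⟩ := cs.exists_reduced_word' (π ω * s r)
  have hvprod : π (ω''.concat r) = π ω := by
    rw [cs.wordProd_concat, ← heq'', mul_assoc, cs.simple_mul_simple_self, mul_one]
  have hcnt'' : cnt (s r) (ris ω'') = 0 := by
    apply cnt_eq_zero_of_not_mem
    intro hmem
    have hinv := cs.isRightInversion_of_mem_rightInvSeq hred'' hmem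
    rw [← heq''] at hinv
    have h1 : ℓ (π ω * s r * s r) < ℓ (π ω * s r) := hinv.2
    rw [mul_assoc, cs.simple_mul_simple_self, mul_one] at h1
    exact absurd hdes (by unfold CoxeterSystem.IsRightDescent; omega)
  have hcntv : cnt (s r) (ris (ω''.concat r)) = 1 := by
    rw [cs.rightInvSeq_concat]
    rw [List.concat_eq_append, cnt_append]
    have hm : cnt (s r) (List.map (⇑(MulAut.conj (s r))) (ris ω'')) = 0 := by
      have := cnt_map_inj (s r) (⇑(MulAut.conj (s r)))
        (MulEquiv.injective _) (ris ω'')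
      have hfix : (MulAut.conj (s r)) (s r) = s r := by
        simp [MulAut.conj_apply]
      rw [hfix] at this
      rw [this, hcnt'']
    rw [hm]
    simp [cnt_cons]
  have hpar := cnt_parity_eq cs hra hvprod (s r)
  rw [hcntv] at hpar
  apply mem_of_cnt_ne_zero (t := s r) (l := ris ω)
  intro h0
  rw [h0] at hpar
  simp at hpar

lemma descent_structure (hra : M.IsRightAngled) {ω : List B} (hred : cs.IsReduced ω) {r : B}
    (hdes : cs.IsRightDescent (π ω) r) :
    ∃ j, ∃ hj : j < ω.length, ω.get ⟨j, hj⟩ = r ∧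
      Commute (cs.simple r) (π (ω.drop (j + 1))) ∧
      π (ω.eraseIdx j) = π ω * s r := by
  have hmem := mem_ris_of_descent cs hra hred hdes
  obtain ⟨j, hj, hget⟩ := List.mem_iff_getElem.mp hmem
  rw [cs.length_rightInvSeq] at hj
  have hgetD : (ris ω).getD j 1 = s r := by
    rw [List.getD_eq_getElem _ _ (by rw [cs.length_rightInvSeq]; exact hj)]
    exact hget
  have hform := cs.getD_rightInvSeq ω j
  rw [hgetD] at hform
  have hget? : ω[j]? = some (ω.get ⟨j, hj⟩) := List.getElem?_eq_getElem hj
  rw [hget?] at hform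
  simp only [Option.map_some, Option.getD_some] at hform
  have hjr : ω.get ⟨j, hj⟩ = r := by
    apply conj_simple_eq cs hra (π (ω.drop (j+1)))
    rw [← hform]
  refine ⟨j, hj, hjr, ?_, ?_⟩
  · rw [hjr] at hform
    have h5 : π (ω.drop (j+1)) * s r = s r * π (ω.drop (j+1)) := by
      calc π (ω.drop (j+1)) * s r
          = π (ω.drop (j+1)) * ((π (ω.drop (j+1)))⁻¹ * s r * π (ω.drop (j+1))) := by
            rw [← hform]
        _ = s r * π (ω.drop (j+1)) := by group
    exact h5.symm
  · have := cs.wordProd_mul_getD_rightInvSeq ω j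
    rw [hgetD] at this
    exact this.symm

lemma reduced_length {ω : List B} (hred : cs.IsReduced ω) : ℓ (π ω) = ω.length := hred

lemma descent_length {w : W} {r : B} (hdes : cs.IsRightDescent w r) :
    ℓ (w * s r) + 1 = ℓ w := cs.isRightDescent_iff.mp hdes

/-- all reduced words of an element have the same set of letters -/
lemma supp_unique (hra : M.IsRightAngled) : ∀ (n : ℕ) (ω ω' : List B), ω.length ≤ n → cs.IsReduced ω →
    cs.IsReduced ω' → π ω = π ω' → ∀ a, a ∈ ω → a ∈ ω' := by
  intro n
  induction n with
  | zero =>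
    intro ω ω' hlen _ _ _ a ha
    rw [Nat.le_zero, List.length_eq_zero_iff] at hlen
    subst hlen
    simp at ha
  | succ n ih =>
    intro ω ω' hlen hred hred' hprod a ha
    rcases List.eq_nil_or_concat ω with rfl | ⟨Y, x, hconcat⟩
    · simp at ha
    · rw [List.concat_eq_append] at hconcat
      subst hconcat
      have hx_mem : a ∈ Y ∨ a = x := by
        rcases List.mem_append.mp ha with h | h
        · exact Or.inl h
        · exact Or.inr (by simpa using h)
      have hlenY : (Y ++ [x]).length = Y.length + 1 := by simp
      have hYred : cs.IsReduced Y := by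
        have := hred.take (Y.length)
        rwa [List.take_left] at this
      have hprodY : π (Y ++ [x]) = π Y * s x := by
        rw [cs.wordProd_append, cs.wordProd_singleton]
      have hdes : cs.IsRightDescent (π ω') x := by
        rw [← hprod]
        have h1 : π (Y ++ [x]) * s x = π Y := by
          rw [hprodY, mul_assoc, cs.simple_mul_simple_self, mul_one]
        unfold CoxeterSystem.IsRightDescent
        rw [h1, reduced_length cs hred, reduced_length cs hYred, hlenY]
        omega
      obtain ⟨j, hj, hjx, _, herase⟩ := descent_structure cs hra hred' hdes
      have hprod_erase : π (ω'.eraseIdx j) = π Y := by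
        rw [herase, ← hprod, hprodY, mul_assoc, cs.simple_mul_simple_self, mul_one]
      have hlen_omega : (Y ++ [x]).length = ℓ (π ω') := by
        rw [← hprod]; exact (reduced_length cs hred).symm
      have hlen' : ω'.length = Y.length + 1 := by
        rw [← reduced_length cs hred', ← hlen_omega, hlenY]
      have herase_red : cs.IsReduced (ω'.eraseIdx j) := by
        unfold CoxeterSystem.IsReduced
        rw [hprod_erase, reduced_length cs hYred]
        have h2 := List.length_eraseIdx_add_one hj
        omega
      rcases hx_mem with haY | hax
      · have haE : a ∈ ω'.eraseIdx j := by
          apply ih Y (ω'.eraseIdx j) (by rw [hlenY] at hlen; omega) hYred herase_red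
            hprod_erase.symm a haY
        exact (List.eraseIdx_sublist ω' j).mem haE
      · subst hax
        rw [← hjx]
        exact List.get_mem ω' ⟨j, hj⟩

end StrongExchange

section Measure

open scoped Classical

/-- length of the maximal alternating prefix with pattern p,q,p,q,... -/
noncomputable def altLen (p q : B) : List B → ℕ
  | [] => 0
  | c :: l => if c = p then 1 + altLen q p l else 0

@[simp] lemma altLen_nil (p q : B) : altLen p q ([] : List B) = 0 := rfl

lemma altLen_cons (p q c : B) (l : List B) :
    altLen p q (c :: l) = if c = p then 1 + altLen q p l else 0 := rfl

lemma altLen_cons_self (p q : B) (l : List B) :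
    altLen p q (p :: l) = 1 + altLen q p l := by rw [altLen_cons, if_pos rfl]

lemma altLen_cons_ne (p q c : B) (l : List B) (h : c ≠ p) :
    altLen p q (c :: l) = 0 := by rw [altLen_cons, if_neg h]

lemma altLen_le (l : List B) : ∀ p q : B, altLen p q l ≤ l.length := by
  induction l with
  | nil => intro p q; simp
  | cons c l ih =>
    intro p q
    by_cases h : c = p
    · rw [h, altLen_cons_self]
      have := ih q p
      simp only [List.length_cons]
      omega
    · rw [altLen_cons_ne _ _ _ _ h]; omega

lemma altLen_concat (l : List B) : ∀ (p q c : B),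
    altLen p q (l ++ [c]) ≤ altLen p q l ∨ altLen p q l = l.length := by
  induction l with
  | nil => intro p q c; right; simp
  | cons d l ih =>
    intro p q c
    by_cases h : d = p
    · rw [h, List.cons_append, altLen_cons_self, altLen_cons_self]
      rcases ih q p c with h1 | h1
      · left; omega
      · right; simp only [List.length_cons]; omega
    · rw [List.cons_append, altLen_cons_ne _ _ _ _ h, altLen_cons_ne _ _ _ _ h]
      left; omega

/-- zigzag lists -/
inductive Zig : B → B → List B → Prop
  | nil (p q : B) : Zig p q []
  | cons (p q : B) (l : List B) : Zig q p l → Zig p q (p :: l)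

lemma zig_of_altLen_eq_length (l : List B) : ∀ p q : B,
    altLen p q l = l.length → Zig p q l := by
  induction l with
  | nil => intro p q _; exact Zig.nil p q
  | cons c l ih =>
    intro p q h
    by_cases hc : c = p
    · rw [hc, altLen_cons_self] at h
      have h2 : altLen q p l = l.length := by
        simp only [List.length_cons] at h; omega
      rw [hc]
      exact Zig.cons p q l (ih q p h2)
    · rw [altLen_cons_ne _ _ _ _ hc] at h
      simp at h

/-- The connectivity run used in the termination measure. -/
noncomputable def runM : List B → ℕ
  | [] => 0
  | [_] => 1
  | a :: b :: l => if a = b then 1 else altLen a b (a :: b :: l)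

lemma runM_cons_cons (a b : B) (l : List B) :
    runM (a :: b :: l) = if a = b then 1 else altLen a b (a :: b :: l) := rfl

lemma runM_pos (c : B) (L : List B) : 1 ≤ runM (c :: L) := by
  cases L with
  | nil => simp [runM]
  | cons b l =>
    rw [runM_cons_cons]
    by_cases h : c = b
    · rw [if_pos h]
    · rw [if_neg h, altLen_cons_self]; omega

lemma runM_le (L : List B) : runM L ≤ L.length := by
  match L with
  | [] => simp [runM]
  | [a] => simp [runM]
  | a :: b :: l =>
    rw [runM_cons_cons]
    by_cases h : a = b
    · rw [if_pos h]; simp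
    · rw [if_neg h]; exact altLen_le _ a b

/-- termination measure for the main commutation lemma -/
noncomputable def msr (Wd : List B) (g : B) : ℕ :=
  (Wd.length + 1) * (Wd.length + 2) - runM (g :: Wd.reverse)

lemma msr_pos (Wd : List B) (g : B) : 1 ≤ msr Wd g := by
  have h1 := runM_le (g :: Wd.reverse)
  simp only [List.length_cons, List.length_reverse] at h1
  unfold msr
  have hm : (Wd.length + 1) * 2 ≤ (Wd.length + 1) * (Wd.length + 2) :=
    Nat.mul_le_mul_left _ (by omega)
  omega

lemma msr_lt_of_shorter (Wd Wd' : List B) (g g' : B) (h : Wd'.length < Wd.length) :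
    msr Wd' g' < msr Wd g := by
  unfold msr
  have h1 := runM_pos g' Wd'.reverse
  have h2 := runM_le (g :: Wd.reverse)
  simp only [List.length_cons, List.length_reverse] at h2
  have h3 : (Wd'.length + 1) * (Wd'.length + 2) ≤ Wd.length * (Wd.length + 1) := by
    apply Nat.mul_le_mul <;> omega
  have hexp : (Wd.length + 1) * (Wd.length + 2)
      = Wd.length * (Wd.length + 1) + 2 * Wd.length + 2 := by ring
  omega

end Measure


section Dihedral

open scoped Classical
open DihedralGroup

lemma phi_liftable (hra : M.IsRightAngled) {x g : B} (hxg : M x g = 0) :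
    M.IsLiftable (fun i : B => if i = x then (sr 0 : DihedralGroup 0)
      else if i = g then sr 1 else 1) := by
  have hxg_ne : x ≠ g := by
    intro h
    rw [h, M.diagonal g] at hxg
    omega
  intro i j
  set f : B → DihedralGroup 0 :=
    fun i : B => if i = x then (sr 0 : DihedralGroup 0) else if i = g then sr 1 else 1 with hf
  have fsq : ∀ i, f i * f i = 1 := by
    intro i
    by_cases h1 : i = x
    · rw [hf]; simp only [if_pos h1]; exact sr_mul_self 0
    · by_cases h2 : i = g
      · rw [hf]; simp only [if_neg h1, if_pos h2]; exact sr_mul_self 1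
      · rw [hf]; simp only [if_neg h1, if_neg h2]; exact one_mul 1
  by_cases hM0 : M i j = 0
  · rw [hM0, pow_zero]
  rcases eq_or_ne i j with rfl | hne
  · rw [M.diagonal i, pow_one, fsq]
  have hM2 : M i j = 2 := (hra i j hne).resolve_right hM0
  have hone : f i = 1 ∨ f j = 1 := by
    by_cases hix : i = x
    · right
      have hjx : j ≠ x := fun h => hne (hix.trans h.symm)
      have hjg : j ≠ g := by
        intro h
        rw [hix, h, hxg] at hM2
        omega
      simp [hf, hjx, hjg]
    · by_cases hig : i = g
      · right
        have hjg : j ≠ g := fun h => hne (hig.trans h.symm)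
        have hjx : j ≠ x := by
          intro h
          rw [hig, h] at hM2
          rw [M.symmetric g x, hxg] at hM2
          omega
        simp [hf, hjx, hjg]
      · left; simp [hf, hix, hig]
  rw [hM2, sq]
  rcases hone with h1 | h1
  · rw [h1, one_mul]; exact fsq j
  · rw [h1, mul_one]; exact fsq i

/-- homomorphism to the infinite dihedral group killing all generators except x, g -/
noncomputable def phiHom (hra : M.IsRightAngled) {x g : B} (hxg : M x g = 0) :
    W →* DihedralGroup 0 :=
  cs.lift ⟨_, phi_liftable hra hxg⟩

lemma phiHom_x (hra : M.IsRightAngled) {x g : B} (hxg : M x g = 0) :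
    phiHom cs hra hxg (s x) = sr 0 := by
  have := cs.lift_apply_simple (phi_liftable (M := M) hra hxg) x
  rw [phiHom, this, if_pos rfl]

lemma phiHom_g (hra : M.IsRightAngled) {x g : B} (hxg : M x g = 0) :
    phiHom cs hra hxg (s g) = sr 1 := by
  have hxg_ne : x ≠ g := by
    intro h
    rw [h, M.diagonal g] at hxg
    omega
  have := cs.lift_apply_simple (phi_liftable (M := M) hra hxg) g
  rw [phiHom, this, if_neg (Ne.symm hxg_ne), if_pos rfl]

/-- closed form for products of zigzag words starting with x -/
noncomputable def Xf (n : ℕ) : DihedralGroup 0 :=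
  if n % 2 = 0 then r ((n / 2 : ℕ) : ZMod 0) else sr (-((n / 2 : ℕ) : ZMod 0))

/-- closed form for products of zigzag words starting with g -/
noncomputable def Yf (n : ℕ) : DihedralGroup 0 :=
  if n % 2 = 0 then r (-((n / 2 : ℕ) : ZMod 0)) else sr (((n / 2 : ℕ) : ZMod 0) + 1)

lemma sr0_mul_Yf (m : ℕ) : sr 0 * Yf m = Xf (m + 1) := by
  rcases Nat.even_or_odd m with he | ho
  · have h0 : m % 2 = 0 := Nat.even_iff.mp he
    have h1 : (m + 1) % 2 = 1 := by omega
    have h2 : (m + 1) / 2 = m / 2 := by omega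
    rw [Yf, Xf, if_pos h0, if_neg (by omega : ¬ (m+1) % 2 = 0), h2, sr_mul_r, zero_add]
  · have h0 : m % 2 = 1 := Nat.odd_iff.mp ho
    have h2 : (m + 1) / 2 = m / 2 + 1 := by omega
    rw [Yf, Xf, if_neg (by omega : ¬ m % 2 = 0), if_pos (by omega : (m+1) % 2 = 0), h2,
      sr_mul_sr]
    push_cast
    ring_nf

lemma sr1_mul_Xf (m : ℕ) : sr 1 * Xf m = Yf (m + 1) := by
  rcases Nat.even_or_odd m with he | ho
  · have h0 : m % 2 = 0 := Nat.even_iff.mp he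
    have h2 : (m + 1) / 2 = m / 2 := by omega
    rw [Xf, Yf, if_pos h0, if_neg (by omega : ¬ (m+1) % 2 = 0), h2, sr_mul_r]
    push_cast
    ring_nf
  · have h0 : m % 2 = 1 := Nat.odd_iff.mp ho
    have h2 : (m + 1) / 2 = m / 2 + 1 := by omega
    rw [Xf, Yf, if_neg (by omega : ¬ m % 2 = 0), if_pos (by omega : (m+1) % 2 = 0), h2,
      sr_mul_sr]
    push_cast
    ring_nf

lemma zig_phi (hra : M.IsRightAngled) {x g : B} (hxg : M x g = 0) (l : List B) :
    (Zig x g l → phiHom cs hra hxg (π l) = Xf l.length) ∧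
    (Zig g x l → phiHom cs hra hxg (π l) = Yf l.length) := by
  induction l with
  | nil =>
    constructor <;> intro _ <;>
      simp [CoxeterSystem.wordProd_nil, Xf, Yf, map_one, one_def, -r_zero]
  | cons c l ih =>
    constructor
    · intro hz
      rcases hz with _ | ⟨_, _, _, hz'⟩
      rw [cs.wordProd_cons, map_mul, phiHom_x cs hra hxg, ih.2 hz']
      have h1 : sr (0 : ZMod 0) * Yf l.length = Xf (l.length + 1) := sr0_mul_Yf l.length
      rw [h1]
      simp
    · intro hz
      rcases hz with _ | ⟨_, _, _, hz'⟩
      rw [cs.wordProd_cons, map_mul, phiHom_g cs hra hxg, ih.1 hz']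
      have h1 : sr (1 : ZMod 0) * Xf l.length = Yf (l.length + 1) := sr1_mul_Xf l.length
      rw [h1]
      simp

lemma not_commute_sr1_Xf {n : ℕ} (hn : 2 ≤ n) : ¬ Commute (sr 1) (Xf n) := by
  intro hc
  rcases Nat.even_or_odd n with he | ho
  · have h0 : n % 2 = 0 := Nat.even_iff.mp he
    rw [Xf, if_pos h0] at hc
    have := hc.eq
    rw [sr_mul_r, r_mul_sr] at this
    have h2 : (1 : ZMod 0) + (n / 2 : ℕ) = 1 - (n / 2 : ℕ) := by
      simpa using this
    have h3 : ((n / 2 : ℕ) : ZMod 0) + ((n / 2 : ℕ) : ZMod 0) = 0 := by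
      linear_combination h2
    have h4 : (((n / 2) + (n / 2) : ℕ) : ZMod 0) = ((0 : ℕ) : ZMod 0) := by
      push_cast
      linear_combination h3
    have h5 : n / 2 + n / 2 = 0 := Nat.cast_injective h4
    omega
  · have h0 : n % 2 = 1 := Nat.odd_iff.mp ho
    rw [Xf, if_neg (by omega : ¬ n % 2 = 0)] at hc
    have := hc.eq
    rw [sr_mul_sr, sr_mul_sr] at this
    have h2 : (-((n / 2 : ℕ) : ZMod 0)) - 1 = 1 - (-((n / 2 : ℕ) : ZMod 0)) := by
      simpa using this
    have h4 : (((n / 2) + (n / 2) + 2 : ℕ) : ZMod 0) = ((0 : ℕ) : ZMod 0) := by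
      push_cast
      linear_combination -h2
    have h5 : n / 2 + n / 2 + 2 = 0 := Nat.cast_injective h4
    omega

end Dihedral


section Main

open scoped Classical
open DihedralGroup

local prefix:100 "ℓ" => cs.length

/-- Key lemma: if `s g` commutes with the product of a reduced word, it commutes with
every letter of the word. -/
lemma comm_all (hra : M.IsRightAngled) :
    ∀ (N : ℕ) (Wd : List B) (g : B), msr Wd g ≤ N → cs.IsReduced Wd →
      Commute (cs.simple g) (π Wd) → ∀ a ∈ Wd, Commute (cs.simple g) (cs.simple a) := by
  intro N
  induction N with
  | zero =>
    intro Wd g hm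
    exact absurd hm (by have := msr_pos Wd g; omega)
  | succ N ih =>
    intro Wd g hmsr hred hcomm a ha
    rcases List.eq_nil_or_concat Wd with rfl | ⟨Y, x, hYx⟩
    · simp at ha
    rw [List.concat_eq_append] at hYx
    subst hYx
    by_cases hn1 : (Y ++ [x]).length = 1
    · have hY : Y = [] := by
        simp only [List.length_append, List.length_singleton] at hn1
        exact List.length_eq_zero_iff.mp (by omega)
      subst hY
      have hax : a = x := by simpa using ha
      subst hax
      rw [List.nil_append] at hcomm
      rwa [cs.wordProd_singleton] at hcomm
    have hn2 : 2 ≤ (Y ++ [x]).length := by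
      have : (Y ++ [x]).length ≠ 0 := by simp
      omega
    have hYlen : Y.length + 1 = (Y ++ [x]).length := by simp
    have hYred : cs.IsReduced Y := by
      have := hred.take Y.length
      rwa [List.take_left] at this
    have hprodx : π (Y ++ [x]) * s x = π Y := by
      rw [cs.wordProd_append, cs.wordProd_singleton, mul_assoc,
        cs.simple_mul_simple_self, mul_one]
    by_cases hdes : cs.IsRightDescent (π (Y ++ [x])) g
    · -- case A : g is a right descent
      obtain ⟨ζ, hζred, hζeq⟩ := cs.exists_reduced_word' (π (Y ++ [x]) * s g)
      have hlen_des := descent_length cs hdes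
      have hζlen : ζ.length + 1 = (Y ++ [x]).length := by
        rw [← reduced_length cs hζred, ← hζeq, ← reduced_length cs hred]
        exact hlen_des
      have hζcomm : Commute (s g) (π ζ) := by
        rw [← hζeq]
        exact hcomm.mul_right (Commute.refl _)
      have hζmsr : msr ζ g ≤ N := by
        have := msr_lt_of_shorter (Y ++ [x]) ζ g g (by omega)
        omega
      have hrec := ih ζ g hζmsr hζred hζcomm
      have hconc_red : cs.IsReduced (ζ ++ [g]) := by
        unfold CoxeterSystem.IsReduced
        rw [cs.wordProd_append, cs.wordProd_singleton, ← hζeq, mul_assoc,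
          cs.simple_mul_simple_self, mul_one, reduced_length cs hred]
        simp only [List.length_append, List.length_singleton]
        omega
      have hconc_prod : π (Y ++ [x]) = π (ζ ++ [g]) := by
        have h1 : π (ζ ++ [g]) = π (Y ++ [x]) := by
          rw [cs.wordProd_append (ζ) ([g]), cs.wordProd_singleton, ← hζeq, mul_assoc,
            cs.simple_mul_simple_self, mul_one]
        exact h1.symm
      have hmem' : a ∈ ζ ++ [g] :=
        supp_unique cs hra (Y ++ [x]).length (Y ++ [x]) (ζ ++ [g]) le_rfl hred hconc_red hconc_prod a ha
      rcases List.mem_append.mp hmem' with h1 | h1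
      · exact hrec a h1
      · have : a = g := by simpa using h1
        rw [this]
    · -- case B : g is not a right descent
      have hx_ne_g : x ≠ g := by
        intro h
        apply hdes
        unfold CoxeterSystem.IsRightDescent
        rw [← h, hprodx, reduced_length cs hred, reduced_length cs hYred]
        omega
      have hρred : cs.IsReduced ((Y ++ [x]) ++ [g]) := by
        unfold CoxeterSystem.IsReduced
        rw [cs.wordProd_append, cs.wordProd_singleton,
          (cs.not_isRightDescent_iff).mp hdes, reduced_length cs hred]
        simp
      have hu_des : cs.IsRightDescent (π ((Y ++ [x]) ++ [g])) x := by
        unfold CoxeterSystem.IsRightDescent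
        have he : π ((Y ++ [x]) ++ [g]) * s x = s g * π Y := by
          rw [cs.wordProd_append, cs.wordProd_singleton, ← hcomm.eq, mul_assoc, hprodx]
        rw [he]
        calc ℓ (s g * π Y) = ℓ (π (g :: Y)) := by rw [cs.wordProd_cons]
          _ ≤ (g :: Y).length := cs.length_wordProd_le _
          _ < ℓ (π ((Y ++ [x]) ++ [g])) := by
              rw [reduced_length cs hρred]
              simp only [List.length_cons, List.length_append, List.length_singleton]
              omega
      obtain ⟨k, hk, hkx, hkcomm, _⟩ := descent_structure cs hra hρred hu_des
      have hklt : k < (Y ++ [x]).length := by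
        rcases Nat.lt_or_ge k (Y ++ [x]).length with h | h
        · exact h
        · exfalso
          have hkeq : k = (Y ++ [x]).length := by
            simp only [List.length_append, List.length_singleton] at hk
            omega
          apply simple_ne cs hra hx_ne_g
          have hg : ((Y ++ [x]) ++ [g]).get ⟨k, hk⟩ = g := by
            rw [List.get_eq_getElem]
            exact List.getElem_concat_length hkeq (by simpa using hk)
          rw [← hkx, hg]
      have hdropeq : ((Y ++ [x]) ++ [g]).drop (k + 1) = (Y ++ [x]).drop (k + 1) ++ [g] :=
        List.drop_append_of_le_length (by omega)
      rw [hdropeq] at hkcomm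
      have hW2red : cs.IsReduced ((Y ++ [x]).drop (k + 1) ++ [g]) := by
        have := hρred.drop (k + 1)
        rwa [hdropeq] at this
      -- establish Commute (s g) (s x)
      have hxg : Commute (cs.simple g) (cs.simple x) := by
        by_cases hk1 : 1 ≤ k
        · -- strictly shorter word
          have hlen2 : ((Y ++ [x]).drop (k + 1) ++ [g]).length < (Y ++ [x]).length := by
            simp only [List.length_append, List.length_drop, List.length_singleton]
            omega
          have hm2 : msr ((Y ++ [x]).drop (k + 1) ++ [g]) x ≤ N := by
            have := msr_lt_of_shorter (Y ++ [x]) ((Y ++ [x]).drop (k + 1) ++ [g]) g x hlen2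
            omega
          have := ih ((Y ++ [x]).drop (k + 1) ++ [g]) x hm2 hW2red hkcomm g
            (by simp)
          exact this.symm
        · have hk0 : k = 0 := by omega
          subst hk0
          by_cases hbase : runM (g :: (Y ++ [x]).reverse) = (Y ++ [x]).length + 1
          · -- fully zigzag word : dihedral group argument
            by_cases hcxg : Commute (cs.simple x) (cs.simple g)
            · exact hcxg.symm
            exfalso
            have hM0 : M x g = 0 := M_eq_zero_of_not_commute cs hra hx_ne_g hcxg
            have hrev : (Y ++ [x]).reverse = x :: Y.reverse := by
              rw [List.reverse_append]
              simp
            have hzigRV : Zig g x (g :: (Y ++ [x]).reverse) := by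
              apply zig_of_altLen_eq_length
              have hne : g ≠ x := Ne.symm hx_ne_g
              have : runM (g :: (Y ++ [x]).reverse) = altLen g x (g :: (Y ++ [x]).reverse) := by
                rw [hrev, runM_cons_cons, if_neg hne]
              rw [← this, hbase]
              simp
            have hzig : Zig x g (Y ++ [x]).reverse := by
              rcases hzigRV with _ | ⟨_, _, _, hz⟩
              exact hz
            have hval : phiHom cs hra hM0 (π (Y ++ [x]).reverse) = Xf (Y ++ [x]).reverse.length :=
              (zig_phi cs hra hM0 (Y ++ [x]).reverse).1 hzig
            have hπ : π (Y ++ [x]) = (π (Y ++ [x]).reverse)⁻¹ := by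
              rw [cs.wordProd_reverse]
              simp
            have hφcomm : Commute (sr 1 : DihedralGroup 0) (Xf (Y ++ [x]).reverse.length) := by
              have h1 : Commute (phiHom cs hra hM0 (s g)) (phiHom cs hra hM0 (π (Y ++ [x]))) :=
                hcomm.map (phiHom cs hra hM0)
              rw [phiHom_g cs hra hM0, hπ, map_inv, hval] at h1
              have := h1.inv_right
              rwa [inv_inv] at this
            have hlenrev : 2 ≤ (Y ++ [x]).reverse.length := by
              rw [List.length_reverse]; omega
            exact not_commute_sr1_Xf hlenrev hφcomm
          · -- chain step : same length, bigger alternating run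
            have hYne : Y ≠ [] := by
              intro h
              rw [h] at hn2
              simp at hn2
            obtain ⟨c, Y', hY'⟩ := List.exists_cons_of_ne_nil hYne
            have hdrop1 : (Y ++ [x]).drop 1 = Y' ++ [x] := by
              rw [hY']
              simp
            have hRV : g :: (Y ++ [x]).reverse = g :: x :: (Y'.reverse ++ [c]) := by
              rw [hY']
              simp
            have hRV2 : x :: ((Y ++ [x]).drop 1 ++ [g]).reverse = x :: g :: x :: Y'.reverse := by
              rw [hdrop1]
              simp
            have hgx_ne : g ≠ x := Ne.symm hx_ne_g
            have hrunRV : runM (g :: (Y ++ [x]).reverse) = 2 + altLen g x (Y'.reverse ++ [c]) := by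
              rw [hRV, runM_cons_cons, if_neg hgx_ne, altLen_cons_self, altLen_cons_self]
              omega
            have hrunRV2 : runM (x :: ((Y ++ [x]).drop 1 ++ [g]).reverse)
                = 3 + altLen g x Y'.reverse := by
              rw [hRV2, runM_cons_cons, if_neg hx_ne_g, altLen_cons_self, altLen_cons_self,
                altLen_cons_self]
              omega
            have hY'len : Y'.reverse.length = (Y ++ [x]).length - 2 := by
              rw [List.length_reverse, hY']
              simp
            have hrun_le : runM (g :: (Y ++ [x]).reverse) ≤ (Y ++ [x]).length := by
              have h1 := runM_le (g :: (Y ++ [x]).reverse)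
              simp only [List.length_cons, List.length_reverse] at h1
              omega
            have hrun_step : runM (g :: (Y ++ [x]).reverse) + 1
                ≤ runM (x :: ((Y ++ [x]).drop 1 ++ [g]).reverse) := by
              rcases altLen_concat Y'.reverse g x c with h1 | h1
              · omega
              · rw [hrunRV2, h1, hY'len]
                have h2 : altLen g x (Y'.reverse ++ [c]) ≤ (Y'.reverse ++ [c]).length :=
                  altLen_le _ g x
                simp only [List.length_append, List.length_singleton, hY'len] at h2
                omega
            have hW2len : ((Y ++ [x]).drop 1 ++ [g]).length = (Y ++ [x]).length := by
              simp only [List.length_append, List.length_drop, List.length_singleton]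
              omega
            have hm2 : msr ((Y ++ [x]).drop 1 ++ [g]) x ≤ N := by
              simp only [msr] at hmsr ⊢
              rw [hW2len]
              have h3 := runM_le (x :: ((Y ++ [x]).drop 1 ++ [g]).reverse)
              simp only [List.length_cons, List.length_reverse, hW2len] at h3
              omega
            have := ih ((Y ++ [x]).drop 1 ++ [g]) x hm2 hW2red hkcomm g (by simp)
            exact this.symm
      -- conclude using the shorter word Y
      have hYcomm : Commute (s g) (π Y) := by
        rw [← hprodx]
        exact hcomm.mul_right hxg
      have hYmsr : msr Y g ≤ N := by
        have := msr_lt_of_shorter (Y ++ [x]) Y g g (by omega)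
        omega
      have hrecY := ih Y g hYmsr hYred hYcomm
      rcases List.mem_append.mp ha with haY | hax
      · exact hrecY a haY
      · have : a = x := by simpa using hax
        rw [this]
        exact hxg

end Main


section Consequences

open scoped Classical

local prefix:100 "ℓ" => cs.length

lemma descent_letters (hra : M.IsRightAngled) {ω : List B} (hred : cs.IsReduced ω) {r : B}
    (hdes : cs.IsRightDescent (π ω) r) :
    ∃ j, ∃ hj : j < ω.length, ω.get ⟨j, hj⟩ = r ∧
      ∀ (m) (hm : m < ω.length), j < m → Commute (cs.simple r) (cs.simple (ω.get ⟨m, hm⟩)) := by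
  obtain ⟨j, hj, hjr, hcm, _⟩ := descent_structure cs hra hred hdes
  refine ⟨j, hj, hjr, ?_⟩
  intro m hm hjm
  have hredd : cs.IsReduced (ω.drop (j + 1)) := hred.drop (j + 1)
  have hall := comm_all cs hra (msr (ω.drop (j + 1)) r) (ω.drop (j + 1)) r le_rfl hredd hcm
  apply hall
  have hidx : m - (j + 1) < (ω.drop (j + 1)).length := by
    rw [List.length_drop]
    omega
  have : (ω.drop (j + 1)).get ⟨m - (j + 1), hidx⟩ = ω.get ⟨m, hm⟩ := by
    simp only [List.get_eq_getElem, List.getElem_drop]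
    congr 1
    omega
  rw [← this]
  exact List.get_mem _ _

lemma descents_commute (hra : M.IsRightAngled) {w : W} {r r' : B}
    (hd : cs.IsRightDescent w r) (hd' : cs.IsRightDescent w r') (hne : r ≠ r') :
    Commute (cs.simple r) (cs.simple r') := by
  obtain ⟨ω, hωred, hωeq⟩ := cs.exists_reduced_word' w
  rw [hωeq] at hd hd'
  obtain ⟨j, hj, hjr, hcm⟩ := descent_letters cs hra hωred hd
  obtain ⟨j', hj', hjr', hcm'⟩ := descent_letters cs hra hωred hd'
  have hjj : j ≠ j' := by
    intro h
    subst h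
    exact hne (hjr ▸ hjr' ▸ rfl)
  rcases Nat.lt_or_ge j j' with h | h
  · have := hcm j' hj' h
    rwa [hjr'] at this
  · have hlt : j' < j := by omega
    have := hcm' j hj hlt
    rw [hjr] at this
    exact this.symm

lemma descent_mem_or_link (hra : M.IsRightAngled) {γ₁ γ₂ : List B}
    (hred : cs.IsReduced (γ₁ ++ γ₂)) {r : B}
    (hdes : cs.IsRightDescent (π (γ₁ ++ γ₂)) r) :
    r ∈ γ₂ ∨ ∀ a ∈ γ₂, Commute (cs.simple a) (cs.simple r) := by
  obtain ⟨j, hj, hjr, hcm⟩ := descent_letters cs hra hred hdes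
  by_cases hj1 : γ₁.length ≤ j
  · left
    have hlt : j - γ₁.length < γ₂.length := by
      simp only [List.length_append] at hj
      omega
    have : (γ₁ ++ γ₂).get ⟨j, hj⟩ = γ₂.get ⟨j - γ₁.length, hlt⟩ := by
      simp only [List.get_eq_getElem]
      rw [List.getElem_append_right hj1]
    rw [← hjr, this]
    exact List.get_mem _ _
  · right
    intro a ha
    obtain ⟨m₂, hm₂, ham⟩ := List.mem_iff_getElem.mp ha
    have hm : γ₁.length + m₂ < (γ₁ ++ γ₂).length := by
      simp only [List.length_append]
      omega
    have hval : (γ₁ ++ γ₂).get ⟨γ₁.length + m₂, hm⟩ = a := by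
      simp only [List.get_eq_getElem]
      rw [List.getElem_append_right (by omega)]
      simpa using ham
    have := hcm (γ₁.length + m₂) hm (by omega)
    rw [hval] at this
    exact this.symm

lemma commute_simple_wordProd {b : B} {l : List B}
    (h : ∀ c ∈ l, Commute (cs.simple b) (cs.simple c)) :
    Commute (cs.simple b) (π l) := by
  induction l with
  | nil => simp [CoxeterSystem.wordProd_nil]
  | cons c l ih =>
    rw [cs.wordProd_cons]
    exact (h c (by simp)).mul_right (ih fun d hd => h d (List.mem_cons_of_mem _ hd))

lemma wordProd_perm_eq {A : Set B} (hcomm : ∀ p ∈ A, ∀ q ∈ A, Commute (cs.simple p) (cs.simple q))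
    {l₁ l₂ : List B} (hperm : l₁.Perm l₂) (hsub : ∀ c ∈ l₁, c ∈ A) :
    π l₁ = π l₂ := by
  have hp : (l₁.map cs.simple).Pairwise Commute := by
    rw [List.pairwise_map]
    apply List.pairwise_of_forall_mem_list
    intro a haa b hbb
    exact hcomm a (hsub a haa) b (hsub b hbb)
  have := List.Perm.prod_eq' (hperm.map cs.simple) hp
  exact this

lemma symmDiff_prod [Fintype B] {A : Set B}
    (hcomm : ∀ p ∈ A, ∀ q ∈ A, Commute (cs.simple p) (cs.simple q)) :
    ∀ (T₂ T₁ : Finset B), ↑T₁ ⊆ A → ↑T₂ ⊆ A →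
      π T₁.toList * π T₂.toList = π ((symmDiff T₁ T₂).toList) := by
  intro T₂
  induction T₂ using Finset.induction_on with
  | empty =>
    intro T₁ h1 _
    have h0 : symmDiff T₁ (∅ : Finset B) = T₁ := by
      ext c
      simp [Finset.mem_symmDiff]
    rw [h0]
    simp
  | @insert a T₂ ha ih =>
    intro T₁ h1 h2
    have haA : a ∈ A := h2 (by simp)
    have h2' : ↑T₂ ⊆ A := fun c hc => h2 (by simp [hc])
    have hins : π (insert a T₂).toList = cs.simple a * π T₂.toList := by
      have hperm := Finset.toList_insert ha
      rw [wordProd_perm_eq cs hcomm hperm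
        (fun c hc => h2 (by simpa using (Finset.mem_toList.mp hc))), cs.wordProd_cons]
    have hcommT1 : Commute (cs.simple a) (π T₁.toList) := by
      apply commute_simple_wordProd
      intro c hc
      exact hcomm a haA c (h1 (by simpa using hc))
    have key : π T₁.toList * π (insert a T₂).toList
        = cs.simple a * π ((symmDiff T₁ T₂).toList) := by
      rw [hins, ← mul_assoc, ← hcommT1.eq, mul_assoc, ih T₁ h1 h2']
    rw [key]
    have hsubsd : ↑(symmDiff T₁ T₂) ⊆ A := by
      intro c hc
      rcases Finset.mem_symmDiff.mp (Finset.mem_coe.mp hc) with ⟨h, _⟩ | ⟨h, _⟩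
      · exact h1 h
      · exact h2' h
    by_cases haT1 : a ∈ T₁
    · have hmem : a ∈ symmDiff T₁ T₂ := Finset.mem_symmDiff.mpr (Or.inl ⟨haT1, ha⟩)
      have hid : symmDiff T₁ (insert a T₂) = (symmDiff T₁ T₂).erase a := by
        ext c
        simp only [Finset.mem_symmDiff, Finset.mem_insert, Finset.mem_erase]
        constructor
        · rintro (⟨hc1, hc2⟩ | ⟨hc1, hc2⟩)
          · push_neg at hc2
            exact ⟨hc2.1, Or.inl ⟨hc1, hc2.2⟩⟩
          · rcases hc1 with rfl | hc1
            · exact absurd haT1 hc2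
            · refine ⟨?_, Or.inr ⟨hc1, hc2⟩⟩
              intro h
              subst h
              exact ha hc1
        · rintro ⟨hca, (⟨hc1, hc2⟩ | ⟨hc1, hc2⟩)⟩
          · exact Or.inl ⟨hc1, by simp [hca, hc2]⟩
          · exact Or.inr ⟨Or.inr hc1, hc2⟩
      rw [hid]
      have hins2 : symmDiff T₁ T₂ = insert a ((symmDiff T₁ T₂).erase a) :=
        (Finset.insert_erase hmem).symm
      have hperm2 := Finset.toList_insert (Finset.notMem_erase a (symmDiff T₁ T₂))
      have hside2 : ∀ c ∈ (insert a ((symmDiff T₁ T₂).erase a)).toList, c ∈ A := by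
        intro c hc
        have hc' := Finset.mem_toList.mp hc
        rw [← hins2] at hc'
        exact hsubsd hc'
      have hthis : π ((symmDiff T₁ T₂).toList)
          = cs.simple a * π (((symmDiff T₁ T₂).erase a).toList) := by
        conv_lhs => rw [hins2]
        rw [wordProd_perm_eq cs hcomm hperm2 hside2, cs.wordProd_cons]
      rw [hthis, ← mul_assoc, cs.simple_mul_simple_self, one_mul]
    · have hmem : a ∉ symmDiff T₁ T₂ := by
        rw [Finset.mem_symmDiff]
        push_neg
        exact ⟨fun h => absurd h haT1, fun h => absurd h ha⟩
      have hid : symmDiff T₁ (insert a T₂) = insert a (symmDiff T₁ T₂) := by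
        ext c
        simp only [Finset.mem_symmDiff, Finset.mem_insert]
        constructor
        · rintro (⟨hc1, hc2⟩ | ⟨hc1, hc2⟩)
          · push_neg at hc2
            exact Or.inr (Or.inl ⟨hc1, hc2.2⟩)
          · rcases hc1 with rfl | hc1
            · exact Or.inl rfl
            · exact Or.inr (Or.inr ⟨hc1, hc2⟩)
        · rintro (rfl | (⟨hc1, hc2⟩ | ⟨hc1, hc2⟩))
          · exact Or.inr ⟨Or.inl rfl, haT1⟩
          · exact Or.inl ⟨hc1, by rintro (rfl | h); exacts [haT1 hc1, hc2 h]⟩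
          · exact Or.inr ⟨Or.inr hc1, hc2⟩
      rw [hid]
      have hperm3 := Finset.toList_insert hmem
      have hside3 : ∀ c ∈ (insert a (symmDiff T₁ T₂)).toList, c ∈ A := by
        intro c hc
        have hc' := Finset.mem_toList.mp hc
        rcases Finset.mem_insert.mp hc' with rfl | h
        · exact haA
        · exact hsubsd h
      rw [wordProd_perm_eq cs hcomm hperm3 hside3, cs.wordProd_cons]

lemma closure_finite [Fintype B] {A : Set B}
    (hcomm : ∀ p ∈ A, ∀ q ∈ A, Commute (cs.simple p) (cs.simple q)) :
    Set.Finite ((Subgroup.closure (cs.simple '' A) : Subgroup W) : Set W) := by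
  have hfin : Set.Finite {w : W | ∃ T : Finset B, ↑T ⊆ A ∧ w = π T.toList} := by
    apply Set.Finite.subset (Set.finite_range (fun T : Finset B => π T.toList))
    rintro w ⟨T, _, rfl⟩
    exact ⟨T, rfl⟩
  have hsd_sub : ∀ (T₁ T₂ : Finset B), ↑T₁ ⊆ A → ↑T₂ ⊆ A → ↑(symmDiff T₁ T₂) ⊆ A := by
    intro T₁ T₂ h1 h2 c hc
    rcases Finset.mem_symmDiff.mp (Finset.mem_coe.mp hc) with ⟨h, _⟩ | ⟨h, _⟩
    · exact h1 h
    · exact h2 h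
  let K : Subgroup W :=
    { carrier := {w : W | ∃ T : Finset B, ↑T ⊆ A ∧ w = π T.toList}
      one_mem' := ⟨∅, by simp, by simp⟩
      mul_mem' := by
        rintro x y ⟨T₁, hT1, rfl⟩ ⟨T₂, hT2, rfl⟩
        exact ⟨symmDiff T₁ T₂, hsd_sub T₁ T₂ hT1 hT2,
          symmDiff_prod cs hcomm T₂ T₁ hT1 hT2⟩
      inv_mem' := by
        rintro x ⟨T, hT, rfl⟩
        refine ⟨T, hT, ?_⟩
        have hone : π T.toList * π T.toList = 1 := by
          rw [symmDiff_prod cs hcomm T T hT hT, symmDiff_self]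
          simp
        rw [inv_eq_of_mul_eq_one_right hone] }
  have hle : Subgroup.closure (cs.simple '' A) ≤ K := by
    rw [Subgroup.closure_le]
    rintro w ⟨a, haA, rfl⟩
    exact ⟨{a}, by simpa, by simp⟩
  exact hfin.subset hle

end Consequences

end AvoidAux

/-- Lemma 4.16 ('avoidlink'): if `W` is one-ended (no complete subgraph separates `Γ`) and
`(W,S)` has no virtual factor separator, `γ₁ ++ γ₂` is a reduced word for `g` with
`⟨lett(γ₂)⟩` infinite, and `s, t` are not right descents of `g`, then there is a walk in `Γ`
from `s` to `t` of length at least two, none of whose interior vertices lies in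
`lk(lett(γ₂)) ∪ B(g)`. -/
theorem avoidlink [Fintype B] (cs : CoxeterSystem M W) (hra : M.IsRightAngled)
    (hone : ∀ T : Set B, T.Pairwise (PresAdj cs) → ¬ SeparatesGraph cs T)
    (hnvfs : ∀ C D : Set B, ¬ IsVirtualFactorSeparator cs C D)
    (g : W) (γ₁ γ₂ : List B)
    (hred : cs.IsReduced (γ₁ ++ γ₂)) (hg : cs.wordProd (γ₁ ++ γ₂) = g)
    (hinf : ((Subgroup.closure (cs.simple '' {x : B | x ∈ γ₂}) : Subgroup W) :
      Set W).Infinite)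
    (s t : B) (hs : ¬ cs.IsRightDescent g s) (ht : ¬ cs.IsRightDescent g t) :
    ∃ l : List B, l.Chain' (PresAdj cs) ∧ l.head? = some s ∧ l.getLast? = some t ∧
      3 ≤ l.length ∧
      ∀ v ∈ (l.drop 1).dropLast,
        v ∉ lk cs {x : B | x ∈ γ₂} ∪ {x : B | cs.IsRightDescent g x} := by
  classical
  set A : Set B := {x : B | x ∈ γ₂} with hA
  set LK : Set B := lk cs A with hLK
  set Bg : Set B := {x : B | cs.IsRightDescent g x} with hBg
  -- a non-commuting pair in the letters of γ₂
  obtain ⟨a0, b0, ha0, hb0, hnc⟩ :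
      ∃ a0 b0 : B, a0 ∈ A ∧ b0 ∈ A ∧ ¬ Commute (cs.simple a0) (cs.simple b0) := by
    by_contra hno
    push_neg at hno
    exact hinf (AvoidAux.closure_finite cs (A := A) (fun p hp q hq => hno p q hp hq))
  -- basic facts
  have hF1 : ∀ r ∈ Bg, ∀ r' ∈ Bg, r ≠ r' → Commute (cs.simple r) (cs.simple r') := by
    intro r hr r' hr' hne
    exact AvoidAux.descents_commute cs hra hr hr' hne
  have hF2 : ∀ r ∈ Bg, r ∉ LK → r ∈ A := by
    intro r hr hrLK
    have hdes : cs.IsRightDescent (cs.wordProd (γ₁ ++ γ₂)) r := by rwa [hg]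
    rcases AvoidAux.descent_mem_or_link cs hra hred hdes with h | h
    · exact h
    · by_cases hrA : r ∈ A
      · exact hrA
      · exfalso
        apply hrLK
        intro a haA
        exact ⟨fun har => hrA (har ▸ haA), h a haA⟩
  have hA_not_LK : ∀ a ∈ A, a ∉ LK := by
    intro a haA hlk
    exact (hlk a haA).1 rfl
  have hLK_comm : ∀ d ∈ LK, ∀ a ∈ A, Commute (cs.simple a) (cs.simple d) := by
    intro d hd a haA
    exact (hd a haA).2
  -- no subset of LK ∪ Bg containing enough separates the graph
  have hKey : ∀ C' : Set B, C' ⊆ LK ∪ Bg → ¬ SeparatesGraph cs C' := by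
    intro C' hsub hsep
    apply hnvfs C' (C' ∩ LK)
    have hmemA : ∀ c ∈ C' \ (C' ∩ LK), c ∈ A ∧ c ∈ Bg := by
      intro c hc
      have hcC : c ∈ C' := hc.1
      have hcLK : c ∉ LK := by
        intro h
        exact hc.2 ⟨hcC, h⟩
      have hcBg : c ∈ Bg := by
        rcases hsub hcC with h | h
        · exact absurd h hcLK
        · exact h
      exact ⟨hF2 c hcBg hcLK, hcBg⟩
    refine ⟨Set.inter_subset_left, hsep, ?_, ?_, ?_⟩
    · apply AvoidAux.closure_finite cs (A := C' \ (C' ∩ LK))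
      intro p hp q hq
      rcases eq_or_ne p q with rfl | hne
      · exact Commute.refl _
      · exact hF1 p (hmemA p hp).2 q (hmemA q hq).2 hne
    · intro c hc d hd
      exact hLK_comm d hd.2 c (hmemA c hc).1
    · refine ⟨a0, b0, ?_, ?_, hnc, ?_⟩
      · intro h
        exact hA_not_LK a0 ha0 h.2
      · intro h
        exact hA_not_LK b0 hb0 h.2
      · intro d hd
        exact ⟨hLK_comm d hd.2 a0 ha0, hLK_comm d hd.2 b0 hb0⟩
  -- every vertex has a neighbour outside LK ∪ Bg
  have hNbr : ∀ u : B, ∃ v : B, PresAdj cs u v ∧ v ∉ LK ∪ Bg := by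
    intro u
    by_contra hno
    push_neg at hno
    by_cases hall : ∀ w : B, w ≠ u → PresAdj cs u w
    · -- u adjacent to everything; find an element of A outside C near u
      obtain ⟨c0, c1, hc0A, hc0C, hncc⟩ :
          ∃ c0 c1 : B, c0 ∈ A ∧ c0 ∉ LK ∪ Bg ∧ ¬ Commute (cs.simple c0) (cs.simple c1) := by
        by_cases ha0Bg : a0 ∈ Bg
        · have hb0Bg : b0 ∉ Bg := by
            intro h
            apply hnc
            rcases eq_or_ne a0 b0 with rfl | hne
            · exact Commute.refl _
            · exact hF1 a0 ha0Bg b0 h hne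
          refine ⟨b0, a0, hb0, ?_, fun h => hnc h.symm⟩
          intro h
          rcases h with h | h
          · exact hA_not_LK b0 hb0 h
          · exact hb0Bg h
        · refine ⟨a0, b0, ha0, ?_, hnc⟩
          intro h
          rcases h with h | h
          · exact hA_not_LK a0 ha0 h
          · exact ha0Bg h
      by_cases hc0u : c0 = u
      · have hc1u : c1 ≠ u := by
          intro h
          apply hncc
          rw [hc0u, h]
        have hadj := hall c1 hc1u
        exact hncc (by rw [hc0u]; exact hadj.2)
      · exact hc0C (hno c0 (hall c0 hc0u))
    · push_neg at hall
      obtain ⟨w, hwne, hwnadj⟩ := hall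
      apply hKey {v | PresAdj cs u v} (fun v hv => hno v hv)
      refine ⟨u, w, ?_, hwnadj, ?_⟩
      · intro h
        exact h.1 rfl
      · rintro ⟨l, hchain, hhead, hlast, hout⟩
        cases l with
        | nil => simp at hhead
        | cons a l' =>
          have hau : a = u := by simpa using hhead
          subst hau
          cases l' with
          | nil =>
            have : a = w := by simpa using hlast
            exact hwne (this ▸ rfl)
          | cons b l'' =>
            have hadj : PresAdj cs a b := (List.isChain_cons_cons.mp hchain).1
            exact hout b (by simp) hadj
  -- the complement of LK ∪ Bg is connected
  have hJoin : ∀ p q : B, p ∉ LK ∪ Bg → q ∉ LK ∪ Bg → JoinedOutside cs (LK ∪ Bg) p q := by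
    have h := hKey (LK ∪ Bg) subset_rfl
    unfold SeparatesGraph at h
    push_neg at h
    exact h
  -- assemble the walk
  obtain ⟨s', hs'adj, hs'C⟩ := hNbr s
  obtain ⟨t', ht'adj, ht'C⟩ := hNbr t
  obtain ⟨l₀, hch, hhd, hlst, hout⟩ := hJoin s' t' hs'C ht'C
  have hl₀ne : l₀ ≠ [] := by
    intro h
    rw [h] at hhd
    simp at hhd
  refine ⟨s :: (l₀ ++ [t]), ?_, rfl, ?_, ?_, ?_⟩
  · -- chain condition
    rw [show s :: (l₀ ++ [t]) = (s :: l₀) ++ [t] by simp]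
    unfold List.Chain'
    rw [List.isChain_append]
    refine ⟨?_, List.isChain_singleton t, ?_⟩
    · rw [List.isChain_cons]
      refine ⟨?_, hch⟩
      intro y hy
      rw [hhd] at hy
      have hys : s' = y := by simpa using hy
      rwa [← hys]
    · intro x hx y hy
      have hyt : t = y := by simpa using hy
      have hxt' : t' = x := by
        cases l₀ with
        | nil => exact absurd rfl hl₀ne
        | cons c l₀' =>
          rw [List.getLast?_cons_cons, hlst] at hx
          simpa using hx
      rw [← hyt, ← hxt']
      exact ⟨Ne.symm ht'adj.1, ht'adj.2.symm⟩
  · rw [show s :: (l₀ ++ [t]) = (s :: l₀) ++ [t] by simp]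
    exact List.getLast?_concat
  · have : 1 ≤ l₀.length := by
      cases l₀ with
      | nil => exact absurd rfl hl₀ne
      | cons c l₀' => simp
    simp only [List.length_cons, List.length_append, List.length_singleton]
    omega
  · intro v hv
    have hvl₀ : v ∈ l₀ := by
      have hdrop : (s :: (l₀ ++ [t])).drop 1 = l₀ ++ [t] := rfl
      rw [hdrop, List.dropLast_concat] at hv
      exact hv
    exact hout v hvl₀
end

section
/- Let (W,S) be a right-angled Coxeter system, let [a1,...,an] be a word in S, and let 1 ≤ i < j ≤ n. If a1⋯an = a1⋯a_{i-1}·a_{i+1}⋯a_{j-1}·a_{j+1}⋯a_n in W (i.e., the letters a_i and a_j delete), then a_i = a_j. -/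
private lemma sameletter_getElem_eraseIdx {α : Type*} (l : List α) (i k : ℕ)
    (h : i < k) (hk : k < l.length) :
    (l.eraseIdx k)[i]'(by rw [List.length_eraseIdx_of_lt hk]; omega) = l[i]'(by omega) := by
  have he : l.eraseIdx k = l.take k ++ l.drop (k + 1) := List.eraseIdx_eq_take_drop_succ l k
  rw [List.getElem_of_eq he, List.getElem_append_left (by simpa [List.length_take] using by omega)]
  simp

private lemma sameletter_sum_eraseIdx {α M : Type*} [AddCommMonoid M] (f : α → M)
    (l : List α) (k : ℕ) (hk : k < l.length) :
    (l.map f).sum = f (l[k]'hk) + ((l.eraseIdx k).map f).sum := by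
  conv_lhs => rw [← List.take_append_drop k l, List.drop_eq_getElem_cons hk]
  rw [List.eraseIdx_eq_take_drop_succ, List.map_append, List.map_append, List.map_cons,
    List.sum_append, List.sum_append, List.sum_cons]
  exact add_left_comm _ _ _

private lemma sameletter_sq_one {B : Type*} (b : B) :
    (Multiplicative.ofAdd (Finsupp.single b (1 : ZMod 2))) ^ 2 = 1 := by
  have h2 : (1 : ZMod 2) + 1 = 0 := by decide
  rw [sq, ← ofAdd_add, ← Finsupp.single_add, h2, Finsupp.single_zero, ofAdd_zero]

/-- Lemma 2.15 ('sameletter'): in a right-angled Coxeter system, if two letters of a word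
delete (removing both does not change the product), then the two letters are equal. -/
theorem sameletter {B W : Type*} [Group W] {M : CoxeterMatrix B}
    (cs : CoxeterSystem M W) (hra : M.IsRightAngled) (ω : List B)
    (i j : Fin ω.length) (hij : i < j)
    (h : cs.wordProd ω = cs.wordProd ((ω.eraseIdx j.val).eraseIdx i.val)) :
    ω.get i = ω.get j := by
  -- abelianization map to `Multiplicative (B →₀ ZMod 2)`
  have hlift : M.IsLiftable (fun b : B => Multiplicative.ofAdd (Finsupp.single b (1 : ZMod 2))) := by
    intro b b'
    rcases eq_or_ne b b' with rfl | hne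
    · rw [M.diagonal, pow_one, ← sq, sameletter_sq_one]
    · rcases hra b b' hne with h2 | h0
      · rw [h2, mul_pow, sameletter_sq_one, sameletter_sq_one, one_mul]
      · rw [h0, pow_zero]
  set π : W →* Multiplicative (B →₀ ZMod 2) := CoxeterSystem.lift cs ⟨_, hlift⟩ with hπ
  have hπs : ∀ b : B, π (cs.simple b) = Multiplicative.ofAdd (Finsupp.single b (1 : ZMod 2)) :=
    fun b => cs.lift_apply_simple hlift b
  have key : ∀ l : List B, (π (cs.wordProd l)).toAdd =
      (l.map fun b => Finsupp.single b (1 : ZMod 2)).sum := by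
    intro l
    induction l with
    | nil => simp
    | cons a t ih =>
      rw [cs.wordProd_cons, map_mul, hπs]
      simp only [List.map_cons, List.sum_cons, ← ih]
      rfl
  have hilt : (i : ℕ) < (ω.eraseIdx j.val).length := by
    rw [List.length_eraseIdx_of_lt j.2]
    omega
  have h1 := sameletter_sum_eraseIdx (fun b => Finsupp.single b (1 : ZMod 2)) ω j.val j.2
  have h2 := sameletter_sum_eraseIdx (fun b => Finsupp.single b (1 : ZMod 2))
    (ω.eraseIdx j.val) i.val hilt
  have hget : (ω.eraseIdx j.val)[(i : ℕ)]'hilt = ω[(i : ℕ)]'i.2 :=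
    sameletter_getElem_eraseIdx ω i.val j.val hij j.2
  have heq : (π (cs.wordProd ω)).toAdd =
      (π (cs.wordProd ((ω.eraseIdx j.val).eraseIdx i.val))).toAdd := by rw [h]
  rw [key, key, h1, h2, hget, ← add_assoc] at heq
  have hsingles : Finsupp.single (ω[(j : ℕ)]'j.2) (1 : ZMod 2)
      + Finsupp.single (ω[(i : ℕ)]'i.2) (1 : ZMod 2) = 0 :=
    add_right_cancel (heq.trans (zero_add _).symm)
  have hval := congrFun (congrArg DFunLike.coe hsingles) (ω[(i : ℕ)]'i.2)
  simp only [Finsupp.add_apply, Finsupp.coe_zero, Pi.zero_apply] at hval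
  by_contra hne
  have hne' : ω.get j ≠ ω.get i := fun hh => hne hh.symm
  simp only [List.get_eq_getElem] at hne'
  rw [Finsupp.single_eq_of_ne' hne', Finsupp.single_eq_same] at hval
  simp at hval
end

section
/- Let (W,S) be a right-angled Coxeter system, g ∈ W, and suppose γ1++γ2 is a reduced word for g. Then for every s ∈ B(g), either s ∈ lett(γ2) or s commutes in W with every element of lett(γ2) (i.e., s ∈ lk(lett(γ2))). -/
namespace RAProof

open List CoxeterSystem Function

variable {B W : Type*} [DecidableEq B] [DecidableEq W] [Group W] {M : CoxeterMatrix B} (cs : CoxeterSystem M W)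

local prefix:100 "σ" => cs.simple
local prefix:100 "π" => cs.wordProd
local prefix:100 "ℓ" => cs.length

theorem commute_of_sq {x y : W} (hx : x * x = 1) (hy : y * y = 1)
    (h : (x * y) ^ 2 = 1) : Commute x y := by
  have h' : x * y * (x * y) = 1 := by rw [← sq]; exact h
  have : x * y = (x * y)⁻¹ := by
    rw [eq_inv_iff_mul_eq_one]; exact h'
  have hxinv : x⁻¹ = x := by rw [inv_eq_iff_mul_eq_one]; exact hx
  have hyinv : y⁻¹ = y := by rw [inv_eq_iff_mul_eq_one]; exact hy
  unfold Commute SemiconjBy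
  rw [this, mul_inv_rev, hxinv, hyinv]

theorem commute_simple_of_two {i j : B} (h : M i j = 2) :
    Commute (σ i) (σ j) :=
  commute_of_sq (cs.simple_mul_simple_self i) (cs.simple_mul_simple_self j)
    (by rw [← h]; exact cs.simple_mul_simple_pow i j)

/-- Every element of the elementary abelian 2-group squares to one. -/
theorem sq_one_zmod2 (g : Multiplicative (B → ZMod 2)) : g * g = 1 := by
  have : g.toAdd + g.toAdd = 0 := by
    funext b
    have : ∀ a : ZMod 2, a + a = 0 := by decide
    exact this (g.toAdd b)
  calc g * g = Multiplicative.ofAdd (g.toAdd + g.toAdd) := rfl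
  _ = Multiplicative.ofAdd 0 := by rw [this]
  _ = 1 := rfl

/-- The detector homomorphism to the abelianization `(ZMod 2)^B`. -/
def fdet (hra : M.IsRightAngled) : W →* Multiplicative (B → ZMod 2) :=
  cs.lift ⟨fun i => Multiplicative.ofAdd (Pi.single i 1), by
    intro i i'
    rcases eq_or_ne i i' with rfl | hne
    · rw [M.diagonal, pow_one]
      exact sq_one_zmod2 _
    · rcases hra i i' hne with h2 | h0
      · rw [h2, sq]
        exact sq_one_zmod2 _
      · rw [h0, pow_zero]⟩

theorem fdet_simple (hra : M.IsRightAngled) (i : B) :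
    fdet cs hra (σ i) = Multiplicative.ofAdd (Pi.single i 1) :=
  cs.lift_apply_simple _ i

theorem simple_injective (hra : M.IsRightAngled) :
    Function.Injective cs.simple := by
  intro i j h
  by_contra hne
  have := congrArg (fdet cs hra) h
  rw [fdet_simple cs hra, fdet_simple cs hra] at this
  have h2 := congrArg Multiplicative.toAdd this
  simp only [toAdd_ofAdd] at h2
  have := congrFun h2 i
  rw [Pi.single_eq_same] at this
  simp [Pi.single_apply, Ne.symm hne] at this


theorem conj_simple_eq_iff (i : B) (t : W) : σ i * t * σ i = σ i ↔ t = σ i := by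
  constructor
  · intro h
    have := congrArg (fun x => σ i * x * σ i) h
    calc t = (σ i * σ i) * t * (σ i * σ i) := by rw [cs.simple_mul_simple_self]; group
    _ = σ i * (σ i * t * σ i) * σ i := by group
    _ = σ i * (σ i) * σ i := by rw [h]
    _ = σ i := by rw [cs.simple_mul_simple_self, one_mul]
  · rintro rfl
    rw [cs.simple_mul_simple_self, one_mul]

/-- The underlying function of a generator of the parity representation. -/
def nfAux (i : B) : W × ZMod 2 → W × ZMod 2 :=
  fun x => (σ i * x.1 * σ i, x.2 + if x.1 = σ i then 1 else 0)

theorem nfAux_invol (i : B) : Involutive (nfAux cs i) := by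
  intro x
  unfold nfAux
  refine Prod.ext ?_ ?_
  · show σ i * (σ i * x.1 * σ i) * σ i = x.1
    calc σ i * (σ i * x.1 * σ i) * σ i = (σ i * σ i) * x.1 * (σ i * σ i) := by group
    _ = x.1 := by rw [cs.simple_mul_simple_self]; group
  · show x.2 + _ + _ = x.2
    rcases eq_or_ne x.1 (σ i) with h | h
    · have h2 : σ i * x.1 * σ i = σ i := (conj_simple_eq_iff cs i x.1).mpr h
      have h3 : (1 + 1 : ZMod 2) = 0 := by decide
      rw [if_pos h, if_pos h2, add_assoc, h3, add_zero]
    · have h2 : σ i * x.1 * σ i ≠ σ i := fun hc => h ((conj_simple_eq_iff cs i x.1).mp hc)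
      rw [if_neg h, if_neg h2, add_zero, add_zero]

/-- A generator of the parity representation. -/
def nf (i : B) : Equiv.Perm (W × ZMod 2) := Involutive.toPerm _ (nfAux_invol cs i)

theorem nf_apply (i : B) (t : W) (ε : ZMod 2) :
    nf cs i (t, ε) = (σ i * t * σ i, ε + if t = σ i then 1 else 0) := rfl

theorem nf_mul_self (i : B) : nf cs i * nf cs i = 1 :=
  Equiv.ext fun x => nfAux_invol cs i x

theorem nf_comm {i j : B} (hc : Commute (σ i) (σ j)) :
    nf cs i * nf cs j = nf cs j * nf cs i := by
  have conj_eq : ∀ (a b : B), Commute (σ a) (σ b) →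
      ∀ t : W, (σ a * t * σ a = σ b) ↔ (t = σ b) := by
    intro a b hab t
    constructor
    · intro h
      have : t = σ a * σ b * σ a := by
        calc t = (σ a * σ a) * t * (σ a * σ a) := by rw [cs.simple_mul_simple_self]; group
        _ = σ a * (σ a * t * σ a) * σ a := by group
        _ = σ a * σ b * σ a := by rw [h]
      rw [this, hab.eq, mul_assoc, cs.simple_mul_simple_self, mul_one]
    · rintro rfl
      rw [hab.eq, mul_assoc, cs.simple_mul_simple_self, mul_one]
  apply Equiv.ext
  rintro ⟨t, ε⟩
  show nf cs i (nf cs j (t, ε)) = nf cs j (nf cs i (t, ε))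
  rw [nf_apply, nf_apply, nf_apply, nf_apply]
  refine Prod.ext ?_ ?_
  · show σ i * (σ j * t * σ j) * σ i = σ j * (σ i * t * σ i) * σ j
    have := hc.eq
    calc σ i * (σ j * t * σ j) * σ i = (σ i * σ j) * t * (σ j * σ i) := by group
    _ = (σ j * σ i) * t * (σ i * σ j) := by rw [hc.eq, (hc.symm).eq]
    _ = σ j * (σ i * t * σ i) * σ j := by group
  · show ε + _ + _ = ε + _ + _
    rw [if_congr (conj_eq j i hc.symm t) rfl rfl, if_congr (conj_eq i j hc t) rfl rfl]
    ring

/-- The parity representation of a right-angled Coxeter system. -/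
def Phi (hra : M.IsRightAngled) : W →* Equiv.Perm (W × ZMod 2) :=
  cs.lift ⟨nf cs, by
    intro i i'
    rcases eq_or_ne i i' with rfl | hne
    · rw [M.diagonal, pow_one]
      exact nf_mul_self cs i
    · rcases hra i i' hne with h2 | h0
      · have hc : Commute (cs.simple i) (cs.simple i') :=
          commute_of_sq (cs.simple_mul_simple_self i) (cs.simple_mul_simple_self i')
            (by rw [← h2]; exact cs.simple_mul_simple_pow i i')
        rw [h2, sq]
        calc nf cs i * nf cs i' * (nf cs i * nf cs i')
            = nf cs i * (nf cs i' * nf cs i) * nf cs i' := by group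
        _ = nf cs i * (nf cs i * nf cs i') * nf cs i' := by rw [← nf_comm cs hc]
        _ = (nf cs i * nf cs i) * (nf cs i' * nf cs i') := by group
        _ = 1 := by rw [nf_mul_self, nf_mul_self, one_mul]
      · rw [h0, pow_zero]⟩

theorem Phi_simple (hra : M.IsRightAngled) (i : B) : Phi cs hra (σ i) = nf cs i :=
  cs.lift_apply_simple _ i

theorem count_ris_concat (ω : List B) (i : B) (t : W) :
    ((cs.rightInvSeq (ω.concat i)).count t : ZMod 2) =
      ((cs.rightInvSeq ω).count (σ i * t * σ i) : ZMod 2) + (if t = σ i then 1 else 0) := by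
  rw [cs.rightInvSeq_concat, List.concat_eq_append, List.count_append]
  have hinj : Function.Injective (MulAut.conj (σ i) : W → W) := (MulAut.conj (σ i)).injective
  have hmap : List.count t (List.map (⇑(MulAut.conj (σ i))) (cs.rightInvSeq ω)) =
      List.count (σ i * t * σ i) (cs.rightInvSeq ω) := by
    have h1 : t = MulAut.conj (σ i) (σ i * t * σ i) := by
      simp only [MulAut.conj_apply, cs.inv_simple]
      calc t = (σ i * σ i) * t * (σ i * σ i) := by rw [cs.simple_mul_simple_self]; group
      _ = σ i * (σ i * t * σ i) * σ i := by group
    rw [h1, List.count_map_of_injective _ _ hinj]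
    rw [← h1]
  rw [hmap]
  push_cast
  congr 1
  rw [List.count_singleton]
  by_cases h : t = σ i
  · rw [if_pos h]
    simp [h]
  · rw [if_neg h]
    have : ¬ (σ i == t) = true := by
      simp only [beq_iff_eq]
      exact fun hc => h hc.symm
    simp [this]

theorem Phi_wordProd (hra : M.IsRightAngled) (ω : List B) (t : W) (ε : ZMod 2) :
    Phi cs hra (π ω) (t, ε) =
      (π ω * t * (π ω)⁻¹, ε + ((cs.rightInvSeq ω).count t : ZMod 2)) := by
  induction ω using List.reverseRecOn generalizing t ε with
  | nil => simp [Equiv.Perm.one_apply]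
  | append_singleton ω i ih =>
      have hconcat : ω ++ [i] = ω.concat i := by simp
      rw [hconcat, cs.wordProd_concat, map_mul]
      show Phi cs hra (π ω) ((Phi cs hra (σ i)) (t, ε)) = _
      rw [Phi_simple, nf_apply, ih]
      rw [count_ris_concat]
      refine Prod.ext ?_ ?_
      · show π ω * (σ i * t * σ i) * (π ω)⁻¹ = π ω * σ i * t * (π ω * σ i)⁻¹
        rw [mul_inv_rev, cs.inv_simple]
        group
      · show _ = ε + _
        push_cast
        ring

theorem count_parity (hra : M.IsRightAngled) {ω₁ ω₂ : List B} (h : π ω₁ = π ω₂) (t : W) :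
    (((cs.rightInvSeq ω₁).count t : ZMod 2)) = ((cs.rightInvSeq ω₂).count t : ZMod 2) := by
  have h1 := Phi_wordProd cs hra ω₁ t 0
  have h2 := Phi_wordProd cs hra ω₂ t 0
  rw [h] at h1
  rw [h1] at h2
  have := congrArg Prod.snd h2
  simpa using this

/-- The exchange property for right-angled Coxeter systems: a right descent appears
in the right inversion sequence of any reduced word. -/
theorem simple_mem_ris (hra : M.IsRightAngled) {ω : List B} {i : B}
    (hred : cs.IsReduced ω) (hd : cs.IsRightDescent (π ω) i) :
    σ i ∈ cs.rightInvSeq ω := by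
  have hlen : ℓ (π ω * σ i) + 1 = ℓ (π ω) := (cs.isRightDescent_iff).mp hd
  obtain ⟨ρ, hρred, hρ⟩ := cs.exists_reduced_word' (π ω * σ i)
  have hπ : π (ρ.concat i) = π ω := by
    rw [cs.wordProd_concat, ← hρ, cs.simple_mul_simple_cancel_right]
  have hred2 : cs.IsReduced (ρ.concat i) := by
    unfold CoxeterSystem.IsReduced at *
    rw [hπ, List.length_concat, ← hρred, ← hρ, hlen]
  have hmem2 : σ i ∈ cs.rightInvSeq (ρ.concat i) := by
    rw [cs.rightInvSeq_concat]
    simp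
  have hcount2 : (cs.rightInvSeq (ρ.concat i)).count (σ i) = 1 := by
    have hnodup := hred2.nodup_rightInvSeq
    exact List.count_eq_one_of_mem hnodup hmem2
  have hpar := count_parity cs hra hπ.symm (σ i)
  rw [hcount2] at hpar
  by_contra hmem
  rw [List.count_eq_zero_of_not_mem hmem] at hpar
  simp only [Nat.cast_zero, Nat.cast_one] at hpar
  exact one_ne_zero hpar.symm



section Dihedral

/-- Translation by `n` as a permutation of `ℤ`. -/
def Tr (n : ℤ) : Equiv.Perm ℤ := Equiv.addRight n

/-- Reflection `x ↦ n - x` as a permutation of `ℤ`. -/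
def Rf (n : ℤ) : Equiv.Perm ℤ :=
  Function.Involutive.toPerm (fun x => n - x) (fun x => by simp)

@[simp] theorem Tr_apply (n x : ℤ) : Tr n x = x + n := rfl
@[simp] theorem Rf_apply (n x : ℤ) : Rf n x = n - x := rfl

theorem Tr_zero : Tr 0 = 1 := by ext x; simp
theorem Tr_mul_Tr (m n : ℤ) : Tr m * Tr n = Tr (n + m) := by
  ext x; simp [Equiv.Perm.mul_apply, add_assoc]
theorem Rf_mul_Rf (m n : ℤ) : Rf m * Rf n = Tr (m - n) := by
  ext x; simp [Equiv.Perm.mul_apply]; ring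
theorem Tr_mul_Rf (m n : ℤ) : Tr m * Rf n = Rf (n + m) := by
  ext x; simp [Equiv.Perm.mul_apply]; ring
theorem Rf_mul_Tr (m n : ℤ) : Rf m * Tr n = Rf (m - n) := by
  ext x; simp [Equiv.Perm.mul_apply]; ring

/-- Length function for the infinite dihedral group inside `Equiv.Perm ℤ`. -/
def DL (g : Equiv.Perm ℤ) : ℕ :=
  if g 1 = g 0 + 1 then (2 * g 0).natAbs else (2 * g 0 - 1).natAbs

theorem DL_Tr (n : ℤ) : DL (Tr n) = (2 * n).natAbs := by
  unfold DL
  rw [if_pos (by simp [add_comm])]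
  simp

theorem DL_Rf (n : ℤ) : DL (Rf n) = (2 * n - 1).natAbs := by
  unfold DL
  rw [if_neg (by simp; omega)]
  simp

/-- Affine permutations: translations and reflections. -/
def Aff (g : Equiv.Perm ℤ) : Prop := (∃ n, g = Tr n) ∨ (∃ n, g = Rf n)

theorem aff_one : Aff 1 := Or.inl ⟨0, Tr_zero.symm⟩

theorem aff_mul_Rf {g : Equiv.Perm ℤ} (hg : Aff g) (k : ℤ) : Aff (g * Rf k) := by
  rcases hg with ⟨n, rfl⟩ | ⟨n, rfl⟩
  · exact Or.inr ⟨k + n, Tr_mul_Rf n k⟩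
  · exact Or.inl ⟨n - k, Rf_mul_Rf n k⟩

theorem DL_mul_Rf_le {g : Equiv.Perm ℤ} (hg : Aff g) {k : ℤ} (hk : k = 0 ∨ k = 1) :
    DL (g * Rf k) ≤ DL g + 1 := by
  rcases hg with ⟨n, rfl⟩ | ⟨n, rfl⟩
  · rw [Tr_mul_Rf, DL_Rf, DL_Tr]; omega
  · rw [Rf_mul_Rf, DL_Tr, DL_Rf]; omega

theorem not_both_DL_desc {e : Equiv.Perm ℤ} (he : Aff e) :
    ¬(DL (e * Rf 0) < DL e ∧ DL (e * Rf 1) < DL e) := by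
  rcases he with ⟨n, rfl⟩ | ⟨n, rfl⟩
  · rw [Tr_mul_Rf, Tr_mul_Rf, DL_Rf, DL_Rf, DL_Tr]; omega
  · rw [Rf_mul_Rf, Rf_mul_Rf, DL_Tr, DL_Tr, DL_Rf]; omega

end Dihedral

/-- If `a` and `b` are commuting right descents of `w`, then `a` is still a right descent
of `w * σ b`. -/
theorem fact2 (hra : M.IsRightAngled) {a b : B} (hne : a ≠ b)
    (hc : Commute (σ a) (σ b)) {w : W}
    (ha : cs.IsRightDescent w a) (hb : cs.IsRightDescent w b) :
    cs.IsRightDescent (w * σ b) a := by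
  have hlen : ℓ (w * σ a) + 1 = ℓ w := (cs.isRightDescent_iff).mp ha
  have hlenb : ℓ (w * σ b) + 1 = ℓ w := (cs.isRightDescent_iff).mp hb
  obtain ⟨ρ, hρred, hρ⟩ := cs.exists_reduced_word' (w * σ a)
  have hπ : π (ρ.concat a) = w := by
    rw [cs.wordProd_concat, ← hρ, cs.simple_mul_simple_cancel_right]
  have hred2 : cs.IsReduced (ρ.concat a) := by
    unfold CoxeterSystem.IsReduced at *
    rw [hπ, List.length_concat, ← hρred, ← hρ, hlen]
  have hbmem : σ b ∈ cs.rightInvSeq (ρ.concat a) :=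
    simple_mem_ris cs hra hred2 (by rwa [hπ])
  rw [cs.rightInvSeq_concat] at hbmem
  rw [List.concat_eq_append, List.mem_append] at hbmem
  rcases hbmem with hbmem | hbmem
  · -- σ b is a conjugate of an entry of ris ρ
    rw [List.mem_map] at hbmem
    obtain ⟨r, hrmem, hr⟩ := hbmem
    have hr' : r = σ b := by
      have : σ a * r * σ a = σ b := by
        simpa [MulAut.conj_apply, cs.inv_simple] using hr
      calc r = (σ a * σ a) * r * (σ a * σ a) := by rw [cs.simple_mul_simple_self]; group
      _ = σ a * (σ a * r * σ a) * σ a := by group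
      _ = σ a * σ b * σ a := by rw [this]
      _ = σ b * (σ a * σ a) := by rw [hc.eq]; group
      _ = σ b := by rw [cs.simple_mul_simple_self, mul_one]
    subst hr'
    have hinv := cs.isRightInversion_of_mem_rightInvSeq hρred hrmem
    have : ℓ (π ρ * σ b) < ℓ (π ρ) := hinv.2
    rw [← hρ] at this
    have hswap : w * σ a * σ b = w * σ b * σ a := by
      rw [mul_assoc, mul_assoc, hc.eq.symm]
    rw [hswap] at this
    unfold CoxeterSystem.IsRightDescent
    have h1 : ℓ (w * σ b * σ a) ≥ ℓ (w * σ b) - 1 := by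
      have := cs.length_mul_simple (w * σ b) a
      omega
    omega
  · -- σ b = σ a, contradiction
    simp only [List.mem_singleton] at hbmem
    exact absurd (simple_injective cs hra hbmem.symm) hne

section Proj

/-- The projection of `W` onto the concrete infinite dihedral group, killing all
generators other than `a`, `b`. -/
def pmap (a b : B) (hra : M.IsRightAngled) (hM : M.M a b = 0) : W →* Equiv.Perm ℤ :=
  cs.lift ⟨fun c => if c = a then Rf 0 else if c = b then Rf 1 else 1, by
    have inv2 : ∀ c : B, (if c = a then Rf 0 else if c = b then Rf 1 else 1) *
        (if c = a then Rf 0 else if c = b then Rf 1 else 1) = 1 := by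
      intro c
      split_ifs
      · rw [Rf_mul_Rf, sub_self, Tr_zero]
      · rw [Rf_mul_Rf, sub_self, Tr_zero]
      · rw [one_mul]
    intro i i'
    rcases eq_or_ne i i' with rfl | hnei
    · rw [M.diagonal, pow_one]; exact inv2 i
    · by_cases hab : (i = a ∧ i' = b) ∨ (i = b ∧ i' = a)
      · have h0 : M.M i i' = 0 := by
          rcases hab with ⟨rfl, rfl⟩ | ⟨rfl, rfl⟩
          · exact hM
          · rw [M.symmetric]; exact hM
        rw [h0, pow_zero]
      · rcases hra i i' hnei with h2 | h0
        · rw [h2, sq]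
          dsimp only
          push_neg at hab
          have h1 : (if i = a then Rf 0 else if i = b then Rf 1 else 1) = 1 ∨
              (if i' = a then Rf 0 else if i' = b then Rf 1 else 1) = 1 := by
            by_cases hia : i = a
            · subst hia
              have hi'b : i' ≠ b := hab.1 rfl
              right; rw [if_neg (Ne.symm hnei), if_neg hi'b]
            · by_cases hib : i = b
              · subst hib
                have hi'a : i' ≠ a := hab.2 rfl
                right; rw [if_neg hi'a, if_neg (Ne.symm hnei)]
              · left; rw [if_neg hia, if_neg hib]
          rcases h1 with h1 | h1
          · rw [h1, one_mul, inv2]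
          · rw [h1, mul_one, inv2]
        · rw [h0, pow_zero]⟩

variable (a b : B) (hra : M.IsRightAngled) (hne : a ≠ b) (hM : M.M a b = 0)

theorem pmap_simple_a : pmap cs a b hra hM (σ a) = Rf 0 := by
  unfold pmap
  refine (cs.lift_apply_simple _ a).trans ?_
  simp

include hne in
theorem pmap_simple_b : pmap cs a b hra hM (σ b) = Rf 1 := by
  unfold pmap
  refine (cs.lift_apply_simple _ b).trans ?_
  rw [if_neg (Ne.symm hne), if_pos rfl]

include hne in
theorem pmap_word_aff_le (δ : List B) (hδ : ∀ c ∈ δ, c = a ∨ c = b) :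
    Aff (pmap cs a b hra hM (π δ)) ∧ DL (pmap cs a b hra hM (π δ)) ≤ δ.length := by
  induction δ using List.reverseRecOn with
  | nil =>
      rw [cs.wordProd_nil, map_one]
      refine ⟨aff_one, ?_⟩
      rw [← Tr_zero, DL_Tr]; simp
  | append_singleton δ c ih =>
      have hδ' : ∀ x ∈ δ, x = a ∨ x = b := fun x hx => hδ x (List.mem_append_left _ hx)
      obtain ⟨haff, hle⟩ := ih hδ'
      have hc : c = a ∨ c = b := hδ c (by simp)
      have hcimg : ∃ k : ℤ, (k = (0:ℤ) ∨ k = 1) ∧ pmap cs a b hra hM (σ c) = Rf k := by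
        rcases hc with h | h
        · exact ⟨0, Or.inl rfl, by rw [h]; exact pmap_simple_a cs a b hra hM⟩
        · exact ⟨1, Or.inr rfl, by rw [h]; exact pmap_simple_b cs a b hra hne hM⟩
      obtain ⟨k, hk, himg⟩ := hcimg
      have heq : π (δ ++ [c]) = π δ * σ c := by
        rw [cs.wordProd_append, cs.wordProd_singleton]
      rw [heq, map_mul, himg]
      constructor
      · exact aff_mul_Rf haff k
      · calc DL (pmap cs a b hra hM (π δ) * Rf k) ≤ DL (pmap cs a b hra hM (π δ)) + 1 :=
              DL_mul_Rf_le haff hk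
        _ ≤ δ.length + 1 := by omega
        _ = (δ ++ [c]).length := by simp

theorem altW_mem {x y : B} {m : ℕ} {c : B} (hc : c ∈ alternatingWord x y m) :
    c = x ∨ c = y := by
  induction m generalizing x y with
  | zero => simp [alternatingWord] at hc
  | succ m ih =>
      rw [alternatingWord_succ'] at hc
      rcases List.mem_cons.mp hc with h | h
      · split_ifs at h
        · right; exact h
        · left; exact h
      · exact ih h

include hne in
theorem pmap_altW (m : ℕ) :
    pmap cs a b hra hM (π (alternatingWord a b m)) =
      (if Even m then Tr (-((m/2 : ℕ) : ℤ)) else Rf (((m/2 : ℕ) : ℤ) + 1)) ∧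
    pmap cs a b hra hM (π (alternatingWord b a m)) =
      (if Even m then Tr (((m/2 : ℕ) : ℤ)) else Rf (-((m/2 : ℕ) : ℤ))) := by
  induction m with
  | zero =>
      constructor <;> · simp [alternatingWord, Tr_zero]
  | succ m ih =>
      obtain ⟨ihab, ihba⟩ := ih
      have hcat1 : alternatingWord a b (m+1) = (alternatingWord b a m).concat b :=
        alternatingWord_succ a b m
      have hcat2 : alternatingWord b a (m+1) = (alternatingWord a b m).concat a :=
        alternatingWord_succ b a m
      have himg1 : pmap cs a b hra hM (π (alternatingWord a b (m+1))) =
          pmap cs a b hra hM (π (alternatingWord b a m)) * Rf 1 := by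
        rw [hcat1, cs.wordProd_concat, map_mul, pmap_simple_b cs a b hra hne hM]
      have himg2 : pmap cs a b hra hM (π (alternatingWord b a (m+1))) =
          pmap cs a b hra hM (π (alternatingWord a b m)) * Rf 0 := by
        rw [hcat2, cs.wordProd_concat, map_mul, pmap_simple_a cs a b hra hM]
      rcases Nat.even_or_odd m with hm | hm
      · have hm' : ¬ Even (m + 1) := by simp [Nat.even_add_one, hm]
        have hd : (m+1)/2 = m/2 := by
          rcases hm with ⟨r, hr⟩; omega
        constructor
        · rw [himg1, ihba, if_pos hm, if_neg hm', Tr_mul_Rf, hd, add_comm]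
        · rw [himg2, ihab, if_pos hm, if_neg hm', Tr_mul_Rf, hd, zero_add]
      · have hm0 : ¬ Even m := Nat.not_even_iff_odd.mpr hm
        have hm' : Even (m + 1) := by simpa [Nat.even_add_one] using hm0
        have hd : (m+1)/2 = m/2 + 1 := by
          rcases hm with ⟨r, hr⟩; omega
        constructor
        · rw [himg1, ihba, if_neg hm0, if_pos hm', Rf_mul_Rf, hd]
          congr 1 <;> (push_cast; try ring)
        · rw [himg2, ihab, if_neg hm0, if_pos hm', Rf_mul_Rf, hd]
          congr 1 <;> (push_cast; try ring)

include hne in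
theorem DL_pmap_altW (m : ℕ) :
    DL (pmap cs a b hra hM (π (alternatingWord a b m))) = m ∧
    DL (pmap cs a b hra hM (π (alternatingWord b a m))) = m := by
  obtain ⟨h1, h2⟩ := pmap_altW cs a b hra hne hM m
  rcases Nat.even_or_odd m with hm | hm
  · rw [h1, h2, if_pos hm, if_pos hm, DL_Tr, DL_Tr]
    rcases hm with ⟨r, hr⟩
    constructor <;> · subst hr; omega
  · have hm0 : ¬ Even m := Nat.not_even_iff_odd.mpr hm
    rw [h1, h2, if_neg hm0, if_neg hm0, DL_Rf, DL_Rf]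
    rcases hm with ⟨r, hr⟩
    constructor <;> · subst hr; omega

end Proj

theorem exists_adj {δ : List B} (h : ¬ List.Chain' (fun x y => x ≠ y) δ) :
    ∃ (δ₁ : List B) (c : B) (δ₂ : List B), δ = δ₁ ++ c :: c :: δ₂ := by
  induction δ with
  | nil => exact absurd List.isChain_nil h
  | cons x δ ih =>
      cases δ with
      | nil => exact absurd (List.isChain_singleton x) h
      | cons y t =>
          unfold List.Chain' at h
          rw [List.isChain_cons_cons] at h
          push_neg at h
          by_cases hxy : x = y
          · subst hxy
            exact ⟨[], x, t, rfl⟩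
          · obtain ⟨δ₁, c, δ₂, hsplit⟩ := ih (h hxy)
            exact ⟨x :: δ₁, c, δ₂, by rw [hsplit]; rfl⟩

theorem altW_getLast? (x y : B) (m : ℕ) :
    (alternatingWord x y (m+1)).getLast? = some y := by
  rw [alternatingWord_succ, List.concat_eq_append, List.getLast?_concat]

theorem alt_char {a b : B} {δ : List B} (hab : ∀ c ∈ δ, c = a ∨ c = b)
    (hch : List.Chain' (fun x y => x ≠ y) δ) :
    δ = alternatingWord a b δ.length ∨ δ = alternatingWord b a δ.length := by
  induction δ using List.reverseRecOn with
  | nil => left; rfl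
  | append_singleton δ c ih =>
      have hab' : ∀ x ∈ δ, x = a ∨ x = b := fun x hx => hab x (List.mem_append_left _ hx)
      have hch' : List.Chain' (fun x y => x ≠ y) δ := (List.isChain_append.mp hch).1
      have hlast : ∀ x ∈ δ.getLast?, x ≠ c := by
        intro x hx
        exact (List.isChain_append.mp hch).2.2 x hx c rfl
      rcases eq_or_ne δ [] with rfl | hδne
      · rcases hab c (by simp) with rfl | rfl
        · right
          simp [alternatingWord]
        · left
          simp [alternatingWord]
      · obtain ⟨k, hk⟩ := Nat.exists_eq_succ_of_ne_zero
          (fun h0 => hδne (List.length_eq_zero_iff.mp h0))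
        rcases ih hab' hch' with h | h
        · rw [hk] at h
          have hgl : δ.getLast? = some b := by rw [h]; exact altW_getLast? a b k
          have hbc : b ≠ c := hlast b (by rw [hgl]; rfl)
          have hca : c = a := (hab c (by simp)).resolve_right (Ne.symm hbc)
          right
          have hlen : (δ ++ [c]).length = k + 2 := by simp [hk]
          rw [hlen, alternatingWord_succ, ← h, hca, List.concat_eq_append]
        · rw [hk] at h
          have hgl : δ.getLast? = some a := by rw [h]; exact altW_getLast? b a k
          have hac : a ≠ c := hlast a (by rw [hgl]; rfl)
          have hca : c = b := (hab c (by simp)).resolve_left (Ne.symm hac)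
          left
          have hlen : (δ ++ [c]).length = k + 2 := by simp [hk]
          rw [hlen, alternatingWord_succ, ← h, hca, List.concat_eq_append]




theorem alt_step (a b : B) (hra : M.IsRightAngled) (hne : a ≠ b) (hM : M.M a b = 0)
    (x y : B) (hxy : (x = a ∧ y = b) ∨ (x = b ∧ y = a))
    {u : W} {n₀ : ℕ} {ρu : List B} (hρred : cs.IsReduced ρu) (hρu : π ρu = u)
    (hρlen : ρu.length = n₀)
    (hmin : ∀ α : List B, (∀ c ∈ α, c = a ∨ c = b) → n₀ ≤ ℓ (u * π α))
    (m : ℕ) (hprev : ℓ (u * π (alternatingWord y x m)) = n₀ + m) :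
    ℓ (u * π (alternatingWord x y (m+1))) = n₀ + m + 1 := by
  classical
  set β := alternatingWord y x m with hβ
  have hβlen : β.length = m := length_alternatingWord y x m
  have hβab : ∀ c ∈ β, c = a ∨ c = b := by
    intro c hc
    have := altW_mem (x := y) (y := x) (m := m) (c := c) hc
    rcases hxy with ⟨h1, h2⟩ | ⟨h1, h2⟩ <;> subst h1 <;> subst h2 <;> tauto
  have hcat : alternatingWord x y (m+1) = β.concat y := alternatingWord_succ x y m
  have hprod : u * π (alternatingWord x y (m+1)) = (u * π β) * σ y := by
    rw [hcat, cs.wordProd_concat, mul_assoc]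
  rcases cs.length_mul_simple (u * π β) y with hgood | hbad
  · rw [hprod, hgood, hprev]
  · exfalso
    have hdesc : cs.IsRightDescent (u * π β) y := by
      unfold CoxeterSystem.IsRightDescent; omega
    have hword : π (ρu ++ β) = u * π β := by rw [cs.wordProd_append, hρu]
    have hwred : cs.IsReduced (ρu ++ β) := by
      unfold CoxeterSystem.IsReduced
      rw [hword, hprev, List.length_append, hρlen, hβlen]
    have hmem := simple_mem_ris cs hra hwred (by rwa [hword])
    obtain ⟨j, hj, hgetel⟩ := List.mem_iff_getElem.mp hmem
    have hjlen : j < (ρu ++ β).length := by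
      have := cs.length_rightInvSeq (ρu ++ β)
      omega
    have hgetd : (cs.rightInvSeq (ρu ++ β)).getD j 1 = σ y := by
      rw [List.getD_eq_getElem _ 1 hj, hgetel]
    have herase : (u * π β) * σ y = π ((ρu ++ β).eraseIdx j) := by
      rw [← hword, ← hgetd]
      exact cs.wordProd_mul_getD_rightInvSeq _ j
    by_cases hjn : j < ρu.length
    · have hsplit : (ρu ++ β).eraseIdx j = ρu.eraseIdx j ++ β :=
        List.eraseIdx_append_of_lt_length hjn β
      have hthis : u * π β * σ y = π (ρu.eraseIdx j) * π β := by
        rw [← cs.wordProd_append, ← hsplit]; exact herase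
      have huw : π (ρu.eraseIdx j) = u * π (β ++ [y] ++ β.reverse) := by
        have h1 : π (β ++ [y] ++ β.reverse) = π β * σ y * (π β)⁻¹ := by
          rw [cs.wordProd_append, cs.wordProd_append, cs.wordProd_singleton,
            cs.wordProd_reverse]
        rw [h1]
        have h2 : π (ρu.eraseIdx j) = (u * π β * σ y) * (π β)⁻¹ := by
          rw [hthis]; group
        rw [h2]; group
      have hlet : ∀ c ∈ β ++ [y] ++ β.reverse, c = a ∨ c = b := by
        intro c hc
        rcases List.mem_append.mp hc with hc | hc
        · rcases List.mem_append.mp hc with hc | hc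
          · exact hβab c hc
          · rcases List.mem_singleton.mp hc with rfl
            rcases hxy with ⟨h1, h2⟩ | ⟨h1, h2⟩
            · right; exact h2
            · left; exact h2
        · exact hβab c (List.mem_reverse.mp hc)
      have hminle := hmin (β ++ [y] ++ β.reverse) hlet
      rw [← huw] at hminle
      have h2 : ℓ (π (ρu.eraseIdx j)) ≤ (ρu.eraseIdx j).length := cs.length_wordProd_le _
      have h3 : (ρu.eraseIdx j).length + 1 = ρu.length := List.length_eraseIdx_add_one hjn
      omega
    · push_neg at hjn
      have hsplit : (ρu ++ β).eraseIdx j = ρu ++ β.eraseIdx (j - ρu.length) :=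
        List.eraseIdx_append_of_length_le hjn β
      have hjm : j - ρu.length < β.length := by
        rw [List.length_append] at hjlen
        omega
      have hcancel : π β * σ y = π (β.eraseIdx (j - ρu.length)) := by
        have hthis : π ρu * (π β * σ y) = π ρu * π (β.eraseIdx (j - ρu.length)) := by
          rw [← mul_assoc, hρu]
          rw [herase, hsplit, cs.wordProd_append, hρu]
        exact mul_left_cancel hthis
      have himg := congrArg (pmap cs a b hra hM) hcancel
      rw [map_mul] at himg
      have hLHS : pmap cs a b hra hM (π β) * pmap cs a b hra hM (σ y) =
          pmap cs a b hra hM (π (alternatingWord x y (m+1))) := by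
        rw [hcat, cs.wordProd_concat, map_mul]
      rw [hLHS] at himg
      have hDL1 : DL (pmap cs a b hra hM (π (alternatingWord x y (m+1)))) = m + 1 := by
        rcases hxy with ⟨h1, h2⟩ | ⟨h1, h2⟩
        · rw [h1, h2]
          exact (DL_pmap_altW cs a b hra hne hM (m+1)).1
        · rw [h1, h2]
          exact (DL_pmap_altW cs a b hra hne hM (m+1)).2
      have hlet2 : ∀ c ∈ β.eraseIdx (j - ρu.length), c = a ∨ c = b :=
        fun c hc => hβab c ((List.eraseIdx_sublist β (j - ρu.length)).subset hc)
      have hDL2 := (pmap_word_aff_le cs a b hra hne hM (β.eraseIdx (j - ρu.length)) hlet2).2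
      have hlen2 : (β.eraseIdx (j - ρu.length)).length + 1 = β.length :=
        List.length_eraseIdx_add_one hjm
      rw [himg] at hDL1
      omega

theorem alt_ext (a b : B) (hra : M.IsRightAngled) (hne : a ≠ b) (hM : M.M a b = 0)
    {u : W} {n₀ : ℕ} {ρu : List B} (hρred : cs.IsReduced ρu) (hρu : π ρu = u)
    (hρlen : ρu.length = n₀)
    (hmin : ∀ α : List B, (∀ c ∈ α, c = a ∨ c = b) → n₀ ≤ ℓ (u * π α)) :
    ∀ m : ℕ, ℓ (u * π (alternatingWord a b m)) = n₀ + m ∧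
      ℓ (u * π (alternatingWord b a m)) = n₀ + m := by
  have hℓu : ℓ u = n₀ := by rw [← hρu, hρred, hρlen]
  intro m
  induction m with
  | zero =>
      constructor <;>
        · show ℓ (u * π []) = n₀ + 0
          rw [cs.wordProd_nil, mul_one, hℓu]
          omega
  | succ m ih =>
      constructor
      · exact alt_step cs a b hra hne hM a b (Or.inl ⟨rfl, rfl⟩) hρred hρu hρlen hmin m ih.2
      · exact alt_step cs a b hra hne hM b a (Or.inr ⟨rfl, rfl⟩) hρred hρu hρlen hmin m ih.1

theorem len_eq_DL (a b : B) (hra : M.IsRightAngled) (hne : a ≠ b) (hM : M.M a b = 0)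
    {u : W} {n₀ : ℕ} {ρu : List B} (hρred : cs.IsReduced ρu) (hρu : π ρu = u)
    (hρlen : ρu.length = n₀)
    (hmin : ∀ α : List B, (∀ c ∈ α, c = a ∨ c = b) → n₀ ≤ ℓ (u * π α)) :
    ∀ (n : ℕ) (δ : List B), δ.length ≤ n → (∀ c ∈ δ, c = a ∨ c = b) →
      ℓ (u * π δ) = n₀ + DL (pmap cs a b hra hM (π δ)) := by
  have hℓu : ℓ u = n₀ := by rw [← hρu, hρred, hρlen]
  intro n
  induction n with
  | zero =>
      intro δ hlen hab
      have hδ : δ = [] := List.length_eq_zero_iff.mp (Nat.le_zero.mp hlen)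
      subst hδ
      rw [cs.wordProd_nil, mul_one, map_one, hℓu, ← Tr_zero, DL_Tr]
      simp
  | succ n ih =>
      intro δ hlen hab
      by_cases hch : List.Chain' (fun x y => x ≠ y) δ
      · rcases alt_char hab hch with h | h
        · rw [h, (DL_pmap_altW cs a b hra hne hM δ.length).1]
          exact (alt_ext cs a b hra hne hM hρred hρu hρlen hmin δ.length).1
        · rw [h, (DL_pmap_altW cs a b hra hne hM δ.length).2]
          exact (alt_ext cs a b hra hne hM hρred hρu hρlen hmin δ.length).2
      · obtain ⟨δ₁, c, δ₂, rfl⟩ := exists_adj hch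
        have hπ : π (δ₁ ++ c :: c :: δ₂) = π (δ₁ ++ δ₂) := by
          rw [cs.wordProd_append, cs.wordProd_append, cs.wordProd_cons, cs.wordProd_cons,
            cs.simple_mul_simple_cancel_left]
        rw [hπ]
        apply ih
        · have h1 : (δ₁ ++ c :: c :: δ₂).length = δ₁.length + δ₂.length + 2 := by
            simp; omega
          have h2 : (δ₁ ++ δ₂).length = δ₁.length + δ₂.length := by simp
          omega
        · intro x hx
          apply hab
          rcases List.mem_append.mp hx with hx | hx
          · exact List.mem_append_left _ hx
          · exact List.mem_append_right _ (List.mem_cons_of_mem _ (List.mem_cons_of_mem _ hx))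

/-- Two distinct letters cannot both be right descents if their Coxeter matrix entry is `0`. -/
theorem fact1 (hra : M.IsRightAngled) {a b : B} (hne : a ≠ b) (hM : M.M a b = 0) {w : W}
    (ha : cs.IsRightDescent w a) (hb : cs.IsRightDescent w b) : False := by
  classical
  set S : Set ℕ := {n | ∃ α : List B, (∀ c ∈ α, c = a ∨ c = b) ∧ n = ℓ (w * π α)} with hSdef
  have hSne : S.Nonempty := ⟨ℓ (w * π []), [], by simp, rfl⟩
  obtain ⟨α₀, hα₀l, hα₀⟩ := Nat.sInf_mem hSne
  set n₀ := sInf S with hn₀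
  set u := w * π α₀ with hu
  have hℓu : ℓ u = n₀ := hα₀.symm
  have hmin : ∀ α : List B, (∀ c ∈ α, c = a ∨ c = b) → n₀ ≤ ℓ (u * π α) := by
    intro α hα
    have heq : u * π α = w * π (α₀ ++ α) := by
      rw [cs.wordProd_append, hu, mul_assoc]
    rw [heq]
    apply Nat.sInf_le
    refine ⟨α₀ ++ α, ?_, rfl⟩
    intro c hc
    rcases List.mem_append.mp hc with hc | hc
    · exact hα₀l c hc
    · exact hα c hc
  obtain ⟨ρu, hρred, hρu'⟩ := cs.exists_reduced_word' u
  have hρu : π ρu = u := hρu'.symm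
  have hρlen : ρu.length = n₀ := by
    have := hρred
    unfold CoxeterSystem.IsReduced at this
    rw [← hρu, this] at hℓu
    exact hℓu
  have hw : w = u * π α₀.reverse := by
    rw [cs.wordProd_reverse, hu]
    group
  have hrl : ∀ c ∈ α₀.reverse, c = a ∨ c = b := fun c hc => hα₀l c (List.mem_reverse.mp hc)
  set e := pmap cs a b hra hM (π α₀.reverse) with he
  have haff : Aff e := (pmap_word_aff_le cs a b hra hne hM α₀.reverse hrl).1
  have hLw : ℓ w = n₀ + DL e := by
    rw [hw]
    exact len_eq_DL cs a b hra hne hM hρred hρu hρlen hmin α₀.reverse.length α₀.reverse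
      le_rfl hrl
  have hLwa : ℓ (w * σ a) = n₀ + DL (e * Rf 0) := by
    have h1 : w * σ a = u * π (α₀.reverse ++ [a]) := by
      rw [cs.wordProd_append, cs.wordProd_singleton, hw]; group
    have h2 : pmap cs a b hra hM (π (α₀.reverse ++ [a])) = e * Rf 0 := by
      rw [cs.wordProd_append, cs.wordProd_singleton, map_mul, pmap_simple_a cs a b hra hM, he]
    rw [h1, ← h2]
    refine len_eq_DL cs a b hra hne hM hρred hρu hρlen hmin (α₀.reverse ++ [a]).length _
      le_rfl ?_
    intro c hc
    rcases List.mem_append.mp hc with hc | hc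
    · exact hrl c hc
    · left; exact List.mem_singleton.mp hc
  have hLwb : ℓ (w * σ b) = n₀ + DL (e * Rf 1) := by
    have h1 : w * σ b = u * π (α₀.reverse ++ [b]) := by
      rw [cs.wordProd_append, cs.wordProd_singleton, hw]; group
    have h2 : pmap cs a b hra hM (π (α₀.reverse ++ [b])) = e * Rf 1 := by
      rw [cs.wordProd_append, cs.wordProd_singleton, map_mul,
        pmap_simple_b cs a b hra hne hM, he]
    rw [h1, ← h2]
    refine len_eq_DL cs a b hra hne hM hρred hρu hρlen hmin (α₀.reverse ++ [b]).length _
      le_rfl ?_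
    intro c hc
    rcases List.mem_append.mp hc with hc | hc
    · exact hrl c hc
    · right; exact List.mem_singleton.mp hc
  apply not_both_DL_desc haff
  constructor
  · have := ha; unfold CoxeterSystem.IsRightDescent at this; omega
  · have := hb; unfold CoxeterSystem.IsRightDescent at this; omega

theorem main_aux (hra : M.IsRightAngled) :
    ∀ (γ₂ γ₁ : List B), cs.IsReduced (γ₁ ++ γ₂) → ∀ t : B,
      cs.IsRightDescent (π (γ₁ ++ γ₂)) t →
      t ∈ γ₂ ∨ ((∀ a ∈ γ₂, a ≠ t ∧ Commute (σ a) (σ t)) ∧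
        cs.IsRightDescent (π γ₁) t) := by
  intro γ₂
  induction γ₂ using List.reverseRecOn with
  | nil =>
      intro γ₁ hred t hd
      right
      refine ⟨by simp, ?_⟩
      rwa [← List.append_nil γ₁]
  | append_singleton γ' c ih =>
      intro γ₁ hred t hd
      rcases eq_or_ne t c with rfl | htc
      · left; simp
      · have hassoc : γ₁ ++ (γ' ++ [c]) = (γ₁ ++ γ') ++ [c] := by simp
        have hw : π (γ₁ ++ (γ' ++ [c])) = π (γ₁ ++ γ') * σ c := by
          rw [hassoc, cs.wordProd_append, cs.wordProd_singleton]
        have hcdesc : cs.IsRightDescent (π (γ₁ ++ (γ' ++ [c]))) c := by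
          unfold CoxeterSystem.IsRightDescent
          rw [hw, cs.simple_mul_simple_cancel_right]
          calc ℓ (π (γ₁ ++ γ')) ≤ (γ₁ ++ γ').length := cs.length_wordProd_le _
          _ < (γ₁ ++ (γ' ++ [c])).length := by simp
          _ = ℓ (π (γ₁ ++ (γ' ++ [c]))) := hred.symm
          _ = ℓ (π (γ₁ ++ γ') * σ c) := by rw [hw]
        have hM2 : M.M t c = 2 := by
          rcases hra t c htc with h | h
          · exact h
          · exact (fact1 cs hra htc h hd hcdesc).elim
        have hcomm : Commute (σ t) (σ c) := commute_simple_of_two cs hM2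
        have hdesc' : cs.IsRightDescent (π (γ₁ ++ (γ' ++ [c])) * σ c) t :=
          fact2 cs hra htc hcomm hd hcdesc
        have hwc : π (γ₁ ++ (γ' ++ [c])) * σ c = π (γ₁ ++ γ') := by
          rw [hw, cs.simple_mul_simple_cancel_right]
        rw [hwc] at hdesc'
        have hred' : cs.IsReduced (γ₁ ++ γ') := by
          have h1 : (γ₁ ++ (γ' ++ [c])).take (γ₁ ++ γ').length = γ₁ ++ γ' := by
            rw [hassoc]
            exact List.take_left
          have h2 := hred.take (γ₁ ++ γ').length
          rwa [h1] at h2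
        rcases ih γ₁ hred' t hdesc' with hmem | ⟨hall, hfin⟩
        · left; exact List.mem_append_left _ hmem
        · right
          refine ⟨?_, hfin⟩
          intro x hx
          rcases List.mem_append.mp hx with hx | hx
          · exact hall x hx
          · rcases List.mem_singleton.mp hx with rfl
            exact ⟨Ne.symm htc, hcomm.symm⟩

end RAProof

/-- First claim in the proof of Lemma 4.16 ('avoidlink'): if `γ₁ ++ γ₂` is a reduced word
for `g` in a right-angled Coxeter system, then every right descent of `g` is either a letter
of `γ₂` or commutes with (and differs from) every letter of `γ₂`. -/
theorem descent_mem_or_link {B W : Type*} [Group W] {M : CoxeterMatrix B}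
    (cs : CoxeterSystem M W) (hra : M.IsRightAngled) (g : W) (γ₁ γ₂ : List B)
    (hred : cs.IsReduced (γ₁ ++ γ₂)) (hg : cs.wordProd (γ₁ ++ γ₂) = g) :
    ∀ s : B, cs.IsRightDescent g s →
      s ∈ γ₂ ∨ ∀ a ∈ γ₂, a ≠ s ∧ Commute (cs.simple a) (cs.simple s) := by
  classical
  intro s hs
  subst hg
  rcases RAProof.main_aux cs hra γ₂ γ₁ hred s hs with h | ⟨h, _⟩
  · left; exact h
  · right; exact h
end
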